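/- arXiv:2011.11150 — 14 statements merged into one kernel-verified Lean document; each statement's English description precedes it below -/
import Mathlib

section
/- Let d ≥ 1 and B ∈ ℝ^{d×d}. Then h_exp(B) = Tr(exp(B∘B)) − d = 0 if and only if its gradient ∇h_exp(B) = (exp(B∘B))ᵀ ∘ (2B) is the zero matrix, i.e., Tr(exp(B∘B)) = d if and only if (exp(B∘B))_{ij} · B_{ji} = 0 for all indices i, j. -/
open Matrix

theorem notears_constraint_zero_iff_grad_zero
    (d : ℕ) (hd : 1 ≤ d) (B : Matrix (Fin d) (Fin d) ℝ) :
    Matrix.trace (NormedSpace.exp (B ⊙ B)) = (d : ℝ) ↔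
      ∀ i j : Fin d, (NormedSpace.exp (B ⊙ B)) i j * B j i = 0 := by
  letI : SeminormedRing (Matrix (Fin d) (Fin d) ℝ) := Matrix.linftyOpSemiNormedRing
  letI : NormedRing (Matrix (Fin d) (Fin d) ℝ) := Matrix.linftyOpNormedRing
  letI : NormedAlgebra ℝ (Matrix (Fin d) (Fin d) ℝ) := Matrix.linftyOpNormedAlgebra
  set A := B ⊙ B with hA
  have hAnn : ∀ i j, 0 ≤ A i j := fun i j => by
    simp only [hA, Matrix.hadamard_apply]; exact mul_self_nonneg _
  have hpow : ∀ (n : ℕ) (i j : Fin d), 0 ≤ (A ^ n) i j := by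
    intro n
    induction n with
    | zero =>
        intro i j; rw [pow_zero]
        by_cases h : i = j <;> simp [Matrix.one_apply, h]
    | succ n ih =>
        intro i j
        rw [pow_succ, Matrix.mul_apply]
        exact Finset.sum_nonneg fun k _ => mul_nonneg (ih i k) (hAnn k j)
  have hsumM : Summable (fun n : ℕ => (Nat.factorial n : ℝ)⁻¹ • A ^ n) :=
    NormedSpace.expSeries_summable' A
  have hexp : NormedSpace.exp A = ∑' n : ℕ, (Nat.factorial n : ℝ)⁻¹ • A ^ n :=
    congrFun (NormedSpace.exp_eq_tsum (𝕂 := ℝ)) A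
  have hsum : ∀ i j : Fin d, Summable (fun n : ℕ => (Nat.factorial n : ℝ)⁻¹ * (A ^ n) i j) := by
    intro i j
    have h1 := (Pi.summable.mp hsumM) i
    have h2 := (Pi.summable.mp h1) j
    simpa [smul_eq_mul] using h2
  have hentry : ∀ i j : Fin d,
      NormedSpace.exp A i j = ∑' n : ℕ, (Nat.factorial n : ℝ)⁻¹ * (A ^ n) i j := by
    intro i j
    rw [hexp]; erw [tsum_apply hsumM, tsum_apply ((Pi.summable.mp hsumM) i)]
    rfl
  have hterm_nonneg : ∀ (i j : Fin d) (n : ℕ), 0 ≤ (Nat.factorial n : ℝ)⁻¹ * (A ^ n) i j :=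
    fun i j n => mul_nonneg (inv_nonneg.mpr (Nat.cast_nonneg _)) (hpow n i j)
  have hterm0 : ∀ i : Fin d, (Nat.factorial 0 : ℝ)⁻¹ * (A ^ 0) i i = 1 := by
    intro i; simp [Matrix.one_apply]
  have hdiag_ge : ∀ i : Fin d, 1 ≤ NormedSpace.exp A i i := by
    intro i
    rw [hentry]
    calc (1:ℝ) = (Nat.factorial 0 : ℝ)⁻¹ * (A ^ 0) i i := (hterm0 i).symm
    _ ≤ _ := Summable.le_tsum (hsum i i) 0 (fun m _ => hterm_nonneg i i m)
  constructor
  · intro htr i j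
    have h1 : ∀ i : Fin d, NormedSpace.exp A i i = 1 := by
      by_contra hc
      push_neg at hc
      obtain ⟨i₀, hi₀⟩ := hc
      have hlt : (d : ℝ) < Matrix.trace (NormedSpace.exp A) := by
        have := Finset.sum_lt_sum (f := fun _ : Fin d => (1:ℝ))
          (g := fun k => NormedSpace.exp A k k)
          (fun k _ => hdiag_ge k)
          ⟨i₀, Finset.mem_univ _, lt_of_le_of_ne (hdiag_ge i₀) (Ne.symm hi₀)⟩
        simpa [Matrix.trace, Matrix.diag] using this
      rw [htr] at hlt
      exact lt_irrefl _ hlt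
    have hzero : ∀ (i : Fin d) (n : ℕ), n ≠ 0 → (A ^ n) i i = 0 := by
      intro i n hn
      have hpair : ∑ m ∈ ({0, n} : Finset ℕ), (Nat.factorial m : ℝ)⁻¹ * (A ^ m) i i ≤ 1 := by
        calc ∑ m ∈ ({0, n} : Finset ℕ), (Nat.factorial m : ℝ)⁻¹ * (A ^ m) i i
            ≤ ∑' m : ℕ, (Nat.factorial m : ℝ)⁻¹ * (A ^ m) i i :=
              Summable.sum_le_tsum _ (fun m _ => hterm_nonneg i i m) (hsum i i)
        _ = 1 := by rw [← hentry]; exact h1 i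
      rw [Finset.sum_pair (Ne.symm hn), hterm0 i] at hpair
      have hle0 : (Nat.factorial n : ℝ)⁻¹ * (A ^ n) i i ≤ 0 := by linarith
      have heq0 := le_antisymm hle0 (hterm_nonneg i i n)
      rcases mul_eq_zero.mp heq0 with h | h
      · exact absurd h (by positivity)
      · exact h
    rcases eq_or_ne (B j i) 0 with hB | hB
    · rw [hB, mul_zero]
    · have hAji : 0 < A j i := by
        have hji : A j i = B j i * B j i := by simp [hA, Matrix.hadamard_apply]
        rw [hji]; exact mul_self_pos.mpr hB
      have hpz : ∀ n : ℕ, (A ^ n) i j = 0 := by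
        intro n
        by_contra hne
        have hpos : 0 < (A ^ n) i j := lt_of_le_of_ne (hpow n i j) (Ne.symm hne)
        have hposd : 0 < (A ^ (n + 1)) i i := by
          have hle : (A ^ n) i j * A j i ≤ (A ^ (n + 1)) i i := by
            rw [pow_succ, Matrix.mul_apply]
            exact Finset.single_le_sum
              (fun k _ => mul_nonneg (hpow n i k) (hAnn k i)) (Finset.mem_univ j)
          exact lt_of_lt_of_le (mul_pos hpos hAji) hle
        rw [hzero i (n + 1) (Nat.succ_ne_zero n)] at hposd
        exact lt_irrefl _ hposd
      have hexp0 : NormedSpace.exp A i j = 0 := by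
        rw [hentry]
        simp [hpz]
      rw [hexp0, zero_mul]
  · intro hg
    have hz : ∀ (n : ℕ) (i j : Fin d), (A ^ n) i j * A j i = 0 := by
      intro n i j
      rcases eq_or_ne (A j i) 0 with h0 | h0
      · rw [h0, mul_zero]
      · have hB : B j i ≠ 0 := by
          intro hB; apply h0; simp [hA, Matrix.hadamard_apply, hB]
        have hexp0 : NormedSpace.exp A i j = 0 := by
          rcases mul_eq_zero.mp (hg i j) with h | h
          · exact h
          · exact absurd h hB
        have hle := Summable.le_tsum (hsum i j) n (fun m _ => hterm_nonneg i j m)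
        rw [← hentry, hexp0] at hle
        have heq0 := le_antisymm hle (hterm_nonneg i j n)
        rcases mul_eq_zero.mp heq0 with h | h
        · exact absurd h (by positivity)
        · rw [h, zero_mul]
    have hdiag : ∀ i : Fin d, NormedSpace.exp A i i = 1 := by
      intro i
      rw [hentry, tsum_eq_single 0 ?_]
      · exact hterm0 i
      · intro n hn
        obtain ⟨m, rfl⟩ := Nat.exists_eq_succ_of_ne_zero hn
        have hAm : (A ^ (m + 1)) i i = 0 := by
          rw [pow_succ, Matrix.mul_apply]
          exact Finset.sum_eq_zero fun k _ => hz m i k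
        rw [hAm, mul_zero]
    simp [Matrix.trace, Matrix.diag, hdiag]
end

section
/- Let d ≥ 1, c > 0 and B ∈ ℝ^{d×d}. Then h_bin(B) = Tr((I + c·B∘B)^d) − d = 0 if and only if its gradient ∇h_bin(B) = ((I + c·B∘B)^{d−1})ᵀ ∘ (2dc·B) is the zero matrix, i.e., Tr((I + c·B∘B)^d) = d if and only if ((I + c·B∘B)^{d−1})_{ij} · B_{ji} = 0 for all indices i, j. -/
open Matrix Finset

lemma pow_binom {d : ℕ} (A : Matrix (Fin d) (Fin d) ℝ) (n : ℕ) :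
    (1 + A) ^ n = ∑ k ∈ Finset.range (n + 1), n.choose k • A ^ k := by
  rw [add_comm, (Commute.one_right A).add_pow]
  refine Finset.sum_congr rfl fun k hk => ?_
  rw [one_pow, mul_one, nsmul_eq_mul, (Nat.cast_commute (n.choose k) (A ^ k)).eq]

lemma pow_binom_apply {d : ℕ} (A : Matrix (Fin d) (Fin d) ℝ) (n : ℕ) (i j : Fin d) :
    ((1 + A) ^ n) i j = ∑ k ∈ Finset.range (n + 1), (n.choose k : ℝ) * (A ^ k) i j := by
  rw [pow_binom]
  rw [Matrix.sum_apply]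
  exact Finset.sum_congr rfl fun k _ => by rw [Matrix.smul_apply, nsmul_eq_mul]

lemma pow_entry_nonneg {d : ℕ} (A : Matrix (Fin d) (Fin d) ℝ) (hA : ∀ i j, 0 ≤ A i j) (k : ℕ) :
    ∀ i j, 0 ≤ (A ^ k) i j := by
  induction k with
  | zero => intro i j; simp [Matrix.one_apply]; split <;> norm_num
  | succ k ih =>
    intro i j
    rw [pow_succ, Matrix.mul_apply]
    exact Finset.sum_nonneg fun l _ => mul_nonneg (ih i l) (hA l j)

lemma trace_pow_succ {d : ℕ} (A : Matrix (Fin d) (Fin d) ℝ) (k : ℕ) :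
    Matrix.trace (A ^ (k + 1)) = ∑ i, ∑ j, (A ^ k) i j * A j i := by
  rw [pow_succ]
  simp [Matrix.trace, Matrix.mul_apply, Matrix.diag]

theorem poly_constraint_zero_iff_grad_zero
    (d : ℕ) (hd : 1 ≤ d) (c : ℝ) (hc : 0 < c) (B : Matrix (Fin d) (Fin d) ℝ) :
    Matrix.trace ((1 + c • (B ⊙ B)) ^ d) = (d : ℝ) ↔
      ∀ i j : Fin d, ((1 + c • (B ⊙ B)) ^ (d - 1)) i j * B j i = 0 := by
  set A : Matrix (Fin d) (Fin d) ℝ := c • (B ⊙ B) with hA_def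
  have hAapp : ∀ i j, A i j = c * (B i j * B i j) := by
    intro i j; simp [hA_def, Matrix.hadamard_apply]
  have hA : ∀ i j, 0 ≤ A i j := by
    intro i j; rw [hAapp]; exact mul_nonneg hc.le (mul_self_nonneg _)
  have hAk := pow_entry_nonneg A hA
  -- trace formula
  have hTr : Matrix.trace ((1 + A) ^ d)
      = (d : ℝ) + ∑ k ∈ Finset.Ico 1 (d + 1), (d.choose k : ℝ) * Matrix.trace (A ^ k) := by
    rw [pow_binom, Matrix.trace_sum, Finset.range_eq_Ico,
      Finset.sum_eq_sum_Ico_succ_bot (by omega)]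
    have h0 : Matrix.trace (d.choose 0 • A ^ 0) = (d : ℝ) := by simp
    rw [h0, zero_add]
    congr 1
    refine Finset.sum_congr rfl fun k _ => ?_
    rw [← Nat.cast_smul_eq_nsmul ℝ, Matrix.trace_smul, smul_eq_mul]
  have hTrNonneg : ∀ k, 0 ≤ Matrix.trace (A ^ k) := by
    intro k
    exact Finset.sum_nonneg fun i _ => hAk k i i
  have hd1 : d - 1 + 1 = d := by omega
  constructor
  · intro h
    -- each trace of A^k vanishes for 1 ≤ k ≤ d
    have hsum : ∑ k ∈ Finset.Ico 1 (d + 1), (d.choose k : ℝ) * Matrix.trace (A ^ k) = 0 := by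
      rw [hTr] at h; linarith
    have hzero : ∀ k ∈ Finset.Ico 1 (d + 1), (d.choose k : ℝ) * Matrix.trace (A ^ k) = 0 := by
      rw [← Finset.sum_eq_zero_iff_of_nonneg]
      · exact hsum
      · intro k _; exact mul_nonneg (by positivity) (hTrNonneg k)
    have htr0 : ∀ k ∈ Finset.Ico 1 (d + 1), Matrix.trace (A ^ k) = 0 := by
      intro k hk
      have hk' := Finset.mem_Ico.mp hk
      have hch : (0 : ℝ) < (d.choose k : ℝ) := by
        exact_mod_cast Nat.cast_pos.mpr (Nat.choose_pos (by omega))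
      have := hzero k hk
      exact (mul_eq_zero.mp this).resolve_left (ne_of_gt hch)
    intro i j
    by_cases hB : B j i = 0
    · simp [hB]
    · have hAji : 0 < A j i := by rw [hAapp]; exact mul_pos hc (mul_self_pos.mpr hB)
      have hentry : ∀ k, k < d → (A ^ k) i j = 0 := by
        intro k hk
        have ht : Matrix.trace (A ^ (k + 1)) = 0 :=
          htr0 (k + 1) (Finset.mem_Ico.mpr ⟨by omega, by omega⟩)
        rw [trace_pow_succ] at ht
        have hinner : ∀ p ∈ Finset.univ, (0:ℝ) ≤ ∑ q, (A ^ k) p q * A q p :=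
          fun p _ => Finset.sum_nonneg fun q _ => mul_nonneg (hAk k p q) (hA q p)
        have h1 : ∑ q, (A ^ k) i q * A q i = 0 :=
          (Finset.sum_eq_zero_iff_of_nonneg hinner).mp ht i (Finset.mem_univ i)
        have h2 : (A ^ k) i j * A j i = 0 :=
          (Finset.sum_eq_zero_iff_of_nonneg
            (fun q _ => mul_nonneg (hAk k i q) (hA q i))).mp h1 j (Finset.mem_univ j)
        exact (mul_eq_zero.mp h2).resolve_right (ne_of_gt hAji)
      have : ((1 + A) ^ (d - 1)) i j = 0 := by
        rw [pow_binom_apply]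
        refine Finset.sum_eq_zero fun k hk => ?_
        rw [hentry k (by have := Finset.mem_range.mp hk; omega), mul_zero]
      rw [this, zero_mul]
  · intro h
    rw [hTr]
    have htr0 : ∀ k ∈ Finset.Ico 1 (d + 1), Matrix.trace (A ^ k) = 0 := by
      intro m hm
      have hm' := Finset.mem_Ico.mp hm
      obtain ⟨k, rfl⟩ : ∃ k, m = k + 1 := ⟨m - 1, by omega⟩
      rw [trace_pow_succ]
      refine Finset.sum_eq_zero fun i _ => Finset.sum_eq_zero fun j _ => ?_
      by_cases hB : B j i = 0
      · have : A j i = 0 := by rw [hAapp, hB]; ring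
        rw [this, mul_zero]
      · have hMij : ((1 + A) ^ (d - 1)) i j = 0 :=
          (mul_eq_zero.mp (h i j)).resolve_right hB
        rw [pow_binom_apply] at hMij
        have hterm : ∀ k' ∈ Finset.range (d - 1 + 1),
            ((d-1).choose k' : ℝ) * (A ^ k') i j = 0 := by
          rw [← Finset.sum_eq_zero_iff_of_nonneg]
          · exact hMij
          · intro k' _; exact mul_nonneg (by positivity) (hAk k' i j)
        have hkmem : k ∈ Finset.range (d - 1 + 1) := Finset.mem_range.mpr (by omega)
        have hch : (0:ℝ) < ((d-1).choose k : ℝ) := by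
          exact_mod_cast Nat.cast_pos.mpr (Nat.choose_pos (by omega))
        have : (A ^ k) i j = 0 :=
          (mul_eq_zero.mp (hterm k hkmem)).resolve_left (ne_of_gt hch)
        rw [this, zero_mul]
    rw [Finset.sum_congr rfl (fun k hk => by rw [htr0 k hk, mul_zero]), Finset.sum_const_zero,
      add_zero]
end

section
/- Let d ≥ 1 and B ∈ ℝ^{d×d}. If Tr(exp(B∘B)) = d, then for all indices i, j one has (exp(B∘B))_{ij} · B_{ji} = 0. -/
open Matrix Nat

theorem notears_constraint_zero_imp_grad_zero
    (d : ℕ) (hd : 1 ≤ d) (B : Matrix (Fin d) (Fin d) ℝ)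
    (h : Matrix.trace (NormedSpace.exp (B ⊙ B)) = (d : ℝ)) :
    ∀ i j : Fin d, (NormedSpace.exp (B ⊙ B)) i j * B j i = 0 := by
  letI : SeminormedRing (Matrix (Fin d) (Fin d) ℝ) := Matrix.linftyOpSemiNormedRing
  letI : NormedRing (Matrix (Fin d) (Fin d) ℝ) := Matrix.linftyOpNormedRing
  letI : NormedAlgebra ℝ (Matrix (Fin d) (Fin d) ℝ) := Matrix.linftyOpNormedAlgebra
  set A := B ⊙ B with hA
  have hA0 : ∀ p q, 0 ≤ A p q := by
    intro p q
    rw [hA, Matrix.hadamard_apply]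
    exact mul_self_nonneg _
  have hApos : ∀ n : ℕ, ∀ i j, 0 ≤ (A ^ n) i j := by
    intro n
    induction n with
    | zero =>
      intro i j
      rw [pow_zero]
      by_cases hij : i = j <;> simp [Matrix.one_apply, hij]
    | succ n ih =>
      intro i j
      rw [pow_succ, Matrix.mul_apply]
      exact Finset.sum_nonneg fun k _ => mul_nonneg (ih i k) (hA0 k j)
  have hsum : HasSum (fun n : ℕ => ((n ! : ℝ)⁻¹) • A ^ n) (NormedSpace.exp A) := by
    rw [NormedSpace.exp_eq_tsum (𝕂 := ℝ)]
    exact (NormedSpace.expSeries_summable' (𝕂 := ℝ) A).hasSum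
  have htr : HasSum (fun n : ℕ => ((n ! : ℝ)⁻¹) * Matrix.trace (A ^ n)) (d : ℝ) := by
    have := hsum.map (LinearMap.toContinuousLinearMap
      (Matrix.traceLinearMap (Fin d) ℝ ℝ)).toLinearMap.toAddMonoidHom
      (LinearMap.toContinuousLinearMap (Matrix.traceLinearMap (Fin d) ℝ ℝ)).continuous
    simpa [Function.comp_def, Matrix.trace_smul, smul_eq_mul, h] using this
  have hterm : ∀ n : ℕ, 0 ≤ ((n ! : ℝ)⁻¹) * Matrix.trace (A ^ n) := fun n =>
    mul_nonneg (by positivity) (Finset.sum_nonneg fun i _ => hApos n i i)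
  have htr0 : ∀ n : ℕ, 1 ≤ n → Matrix.trace (A ^ n) = 0 := by
    intro n hn
    have h0 : ((0 ! : ℝ)⁻¹) * Matrix.trace (A ^ 0) = (d : ℝ) := by
      simp [Matrix.trace_one]
    have hle : ∑ k ∈ ({0, n} : Finset ℕ), ((k ! : ℝ)⁻¹) * Matrix.trace (A ^ k) ≤ (d : ℝ) :=
      sum_le_hasSum _ (fun k _ => hterm k) htr
    rw [Finset.sum_pair (by omega : (0:ℕ) ≠ n), h0] at hle
    have hle2 : ((n ! : ℝ)⁻¹) * Matrix.trace (A ^ n) ≤ 0 := by linarith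
    have hz := le_antisymm hle2 (hterm n)
    have hfac : ((n ! : ℝ)⁻¹) ≠ 0 := by positivity
    exact (mul_eq_zero.mp hz).resolve_left hfac
  have hdiag : ∀ n : ℕ, 1 ≤ n → ∀ i, (A ^ n) i i = 0 := by
    intro n hn i
    have ht := htr0 n hn
    unfold Matrix.trace at ht
    exact (Finset.sum_eq_zero_iff_of_nonneg (fun j _ => hApos n j j)).mp ht i
      (Finset.mem_univ i)
  have key : ∀ k : ℕ, ∀ i j, (A ^ k) i j * B j i = 0 := by
    intro k i j
    rcases eq_or_ne (B j i) 0 with hb | hb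
    · rw [hb, mul_zero]
    · have hAji : 0 < A j i := by
        rw [hA, Matrix.hadamard_apply]
        exact mul_self_pos.mpr hb
      have hdk : (A ^ (k + 1)) i i = 0 := hdiag (k + 1) (by omega) i
      rw [pow_succ, Matrix.mul_apply] at hdk
      have heach := (Finset.sum_eq_zero_iff_of_nonneg
        (fun l _ => mul_nonneg (hApos k i l) (hA0 l i))).mp hdk j (Finset.mem_univ j)
      have : (A ^ k) i j = 0 := by
        rcases mul_eq_zero.mp heach with h' | h'
        · exact h'
        · exact absurd h' (ne_of_gt hAji)
      rw [this, zero_mul]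
  intro i j
  have hc : Continuous fun M : Matrix (Fin d) (Fin d) ℝ => M i j :=
    (continuous_apply j).comp (continuous_apply i)
  let E : Matrix (Fin d) (Fin d) ℝ →+ ℝ :=
    { toFun := fun M => M i j, map_zero' := rfl, map_add' := fun _ _ => rfl }
  have h2 : HasSum (fun n : ℕ => ((n ! : ℝ)⁻¹) * (A ^ n) i j)
      ((NormedSpace.exp A) i j) := by
    have := hsum.map E hc
    exact this
  have h3 := h2.mul_right (B j i)
  have h4 : (fun n : ℕ => ((n ! : ℝ)⁻¹) * (A ^ n) i j * (B j i)) = fun _ => (0:ℝ) := by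
    funext n
    rw [mul_assoc, key n i j, mul_zero]
  rw [h4] at h3
  exact h3.unique hasSum_zero
end

section
/- Let d ≥ 1 and B ∈ ℝ^{d×d}. If (exp(B∘B))_{ij} · B_{ji} = 0 for all indices i, j, then Tr(exp(B∘B)) = d. -/
open Matrix
open scoped Nat

open NormedSpace in
theorem notears_grad_zero_imp_constraint_zero
    (d : ℕ) (hd : 1 ≤ d) (B : Matrix (Fin d) (Fin d) ℝ)
    (h : ∀ i j : Fin d, (NormedSpace.exp (B ⊙ B)) i j * B j i = 0) :
    Matrix.trace (NormedSpace.exp (B ⊙ B)) = (d : ℝ) := by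
  letI : SeminormedRing (Matrix (Fin d) (Fin d) ℝ) := Matrix.linftyOpSemiNormedRing
  letI : NormedRing (Matrix (Fin d) (Fin d) ℝ) := Matrix.linftyOpNormedRing
  letI : NormedAlgebra ℝ (Matrix (Fin d) (Fin d) ℝ) := Matrix.linftyOpNormedAlgebra
  set M : Matrix (Fin d) (Fin d) ℝ := B ⊙ B with hMdef
  -- entries of powers of M are nonneg
  have hpow : ∀ n : ℕ, ∀ i j : Fin d, 0 ≤ (M ^ n) i j := by
    intro n
    induction n with
    | zero => intro i j; simp [Matrix.one_apply]; positivity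
    | succ n ih =>
      intro i j
      rw [pow_succ, Matrix.mul_apply]
      apply Finset.sum_nonneg
      intro k _
      exact mul_nonneg (ih i k) (mul_self_nonneg (B k j))
  have hsum : Summable fun n : ℕ => (n !⁻¹ : ℝ) • M ^ n := expSeries_summable' M
  have hexp : exp M = ∑' n : ℕ, (n !⁻¹ : ℝ) • M ^ n := by rw [exp_eq_tsum (𝕂 := ℝ)]
  -- the trace of exp M * M vanishes
  have key : Matrix.trace (exp M * M) = 0 := by
    rw [Matrix.trace]
    apply Finset.sum_eq_zero
    intro i _
    rw [Matrix.diag_apply, Matrix.mul_apply]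
    apply Finset.sum_eq_zero
    intro j _
    have : M j i = B j i * B j i := rfl
    rw [this, ← mul_assoc, h i j, zero_mul]
  -- linear map A ↦ trace (A * M)
  let L : Matrix (Fin d) (Fin d) ℝ →ₗ[ℝ] ℝ :=
    (Matrix.traceLinearMap (Fin d) ℝ ℝ).comp (LinearMap.mulRight ℝ M)
  have hLcont : Continuous L := L.continuous_of_finiteDimensional
  have hLsum : Summable fun n : ℕ => L ((n !⁻¹ : ℝ) • M ^ n) :=
    hsum.map L.toAddMonoidHom hLcont
  have hLval : ∀ n : ℕ, L ((n !⁻¹ : ℝ) • M ^ n) = (n !⁻¹ : ℝ) * Matrix.trace (M ^ (n + 1)) := by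
    intro n
    simp [L, pow_succ, Matrix.trace_smul, smul_eq_mul, LinearMap.mulRight_apply]
  have htsum0 : (∑' n : ℕ, L ((n !⁻¹ : ℝ) • M ^ n)) = 0 := by
    have := (L.toContinuousLinearMap).map_tsum hsum
    simp only [LinearMap.coe_toContinuousLinearMap'] at this
    rw [← this, ← hexp]
    simpa [L, LinearMap.mulRight_apply] using key
  -- each term is zero
  have hterm : ∀ n : ℕ, Matrix.trace (M ^ (n + 1)) = 0 := by
    intro n
    have hnn : ∀ m : ℕ, 0 ≤ L ((m !⁻¹ : ℝ) • M ^ m) := by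
      intro m
      rw [hLval]
      apply mul_nonneg (by positivity)
      rw [Matrix.trace]
      exact Finset.sum_nonneg fun i _ => hpow (m + 1) i i
    have hle : L ((n !⁻¹ : ℝ) • M ^ n) ≤ 0 := htsum0 ▸ hLsum.le_tsum n fun m _ => hnn m
    have heq : L ((n !⁻¹ : ℝ) • M ^ n) = 0 := le_antisymm hle (hnn n)
    rw [hLval] at heq
    rcases mul_eq_zero.mp heq with h1 | h2
    · exact absurd h1 (by positivity)
    · exact h2
  -- now compute the trace of exp M
  have hTcont : Continuous (Matrix.traceLinearMap (Fin d) ℝ ℝ) :=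
    (Matrix.traceLinearMap (Fin d) ℝ ℝ).continuous_of_finiteDimensional
  have hTr : Matrix.trace (exp M)
      = ∑' n : ℕ, Matrix.trace ((n !⁻¹ : ℝ) • M ^ n) := by
    have := ((Matrix.traceLinearMap (Fin d) ℝ ℝ).toContinuousLinearMap).map_tsum hsum
    simp only [LinearMap.coe_toContinuousLinearMap'] at this
    rw [hexp]
    exact this
  rw [hTr, tsum_eq_single 0 ?_]
  · simp [Matrix.trace_one]
  · intro n hn
    obtain ⟨m, rfl⟩ := Nat.exists_eq_succ_of_ne_zero hn
    rw [Matrix.trace_smul, hterm m, smul_zero]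
end

section
/- Let d ≥ 1, c > 0 and B ∈ ℝ^{d×d}. If Tr((I + c·B∘B)^d) = d, then for all indices i, j one has ((I + c·B∘B)^{d−1})_{ij} · B_{ji} = 0. -/
open Matrix

theorem poly_constraint_zero_imp_grad_zero
    (d : ℕ) (hd : 1 ≤ d) (c : ℝ) (hc : 0 < c) (B : Matrix (Fin d) (Fin d) ℝ)
    (h : Matrix.trace ((1 + c • (B ⊙ B)) ^ d) = (d : ℝ)) :
    ∀ i j : Fin d, ((1 + c • (B ⊙ B)) ^ (d - 1)) i j * B j i = 0 := by
  set M : Matrix (Fin d) (Fin d) ℝ := 1 + c • (B ⊙ B) with hM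
  -- entries of M are nonnegative
  have hMnn : ∀ i j, 0 ≤ M i j := by
    intro i j
    simp only [hM, Matrix.add_apply, Matrix.smul_apply, Matrix.hadamard_apply,
      Matrix.one_apply, smul_eq_mul]
    by_cases hij : i = j
    · simp only [hij, if_true]
      nlinarith [mul_self_nonneg (B j j)]
    · simp only [hij, if_false]
      nlinarith [mul_self_nonneg (B i j)]
  -- diagonal entries of M are ≥ 1
  have hMdiag : ∀ i, 1 + c * (B i i * B i i) = M i i := by
    intro i
    simp [hM, Matrix.add_apply, Matrix.smul_apply, Matrix.hadamard_apply, Matrix.one_apply]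
  have hMdiag1 : ∀ i, (1:ℝ) ≤ M i i := by
    intro i
    rw [← hMdiag i]
    nlinarith [sq_nonneg (B i i)]
  -- off-diagonal entries of M
  have hMoff : ∀ i j, i ≠ j → M i j = c * (B i j * B i j) := by
    intro i j hij
    simp [hM, Matrix.add_apply, Matrix.smul_apply, Matrix.hadamard_apply,
      Matrix.one_apply, hij]
  -- entries of M^n nonnegative
  have hpownn : ∀ n, ∀ i j, 0 ≤ (M ^ n) i j := by
    intro n
    induction n with
    | zero => intro i j; simp [Matrix.one_apply]; positivity
    | succ n ih =>
      intro i j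
      rw [pow_succ, Matrix.mul_apply]
      exact Finset.sum_nonneg fun k _ => mul_nonneg (ih i k) (hMnn k j)
  -- diagonal entries of M^n ≥ 1
  have hpowdiag : ∀ n, ∀ i, (1:ℝ) ≤ (M ^ n) i i := by
    intro n
    induction n with
    | zero => intro i; simp [Matrix.one_apply]
    | succ n ih =>
      intro i
      rw [pow_succ, Matrix.mul_apply]
      calc (1:ℝ) ≤ (M ^ n) i i * M i i := by
            nlinarith [ih i, hMdiag1 i]
        _ ≤ ∑ k, (M ^ n) i k * M k i :=
            Finset.single_le_sum (f := fun k => (M ^ n) i k * M k i)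
              (fun k _ => mul_nonneg (hpownn n i k) (hMnn k i)) (Finset.mem_univ i)
  -- each diagonal entry of M^d equals 1
  have hdiag1 : ∀ i, (M ^ d) i i = 1 := by
    have hsum : ∑ i, ((M ^ d) i i - 1) = 0 := by
      have htr : ∑ i, (M ^ d) i i = (d : ℝ) := h
      rw [Finset.sum_sub_distrib, htr]
      simp
    intro i
    have := (Finset.sum_eq_zero_iff_of_nonneg
      (fun k _ => by linarith [hpowdiag d k])).mp hsum i (Finset.mem_univ i)
    linarith
  -- now the main argument
  intro i j
  have hdd : d = (d - 1) + 1 := (Nat.succ_pred_eq_of_pos hd).symm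
  have hpow : M ^ d = M ^ (d-1) * M := by
    rw [← pow_succ, Nat.sub_add_cancel hd]
  have hexp : (M ^ d) i i = ∑ k, (M ^ (d-1)) i k * M k i := by
    rw [hpow, Matrix.mul_apply]
  by_cases hij : j = i
  · -- diagonal case: show B i i = 0
    subst hij
    have h1 : (M ^ (d-1)) j j * M j j ≤ 1 := by
      rw [← hdiag1 j, hexp]
      exact Finset.single_le_sum (f := fun k => (M ^ (d-1)) j k * M k j)
        (fun k _ => mul_nonneg (hpownn (d-1) j k) (hMnn k j)) (Finset.mem_univ j)
    have h2 : (1:ℝ) ≤ (M ^ (d-1)) j j := hpowdiag (d-1) j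
    have h3 : M j j ≤ 1 := by nlinarith [hMdiag1 j]
    have hx : B j j * B j j ≤ 0 := by
      have := hMdiag j
      nlinarith
    have h4 : B j j = 0 :=
      mul_self_eq_zero.mp (le_antisymm hx (mul_self_nonneg (B j j)))
    rw [h4, mul_zero]
  · -- off-diagonal case
    have hji : j ≠ i := hij
    have hkey : (M ^ (d-1)) i j * M j i = 0 := by
      have hsum : (M ^ (d-1)) i j * M j i + (M ^ (d-1)) i i * M i i
          ≤ ∑ k, (M ^ (d-1)) i k * M k i := by
        rw [← Finset.add_sum_erase _ _ (Finset.mem_univ j)]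
        gcongr
        exact Finset.single_le_sum (f := fun k => (M ^ (d-1)) i k * M k i)
          (fun k _ => mul_nonneg (hpownn (d-1) i k) (hMnn k i))
          (Finset.mem_erase.mpr ⟨fun e => hij e.symm, Finset.mem_univ i⟩)
      rw [← hexp, hdiag1 i] at hsum
      have h1 : (1:ℝ) ≤ (M ^ (d-1)) i i * M i i := by
        nlinarith [hpowdiag (d-1) i, hMdiag1 i]
      have h2 : 0 ≤ (M ^ (d-1)) i j * M j i :=
        mul_nonneg (hpownn (d-1) i j) (hMnn j i)
      linarith
    rw [hMoff j i hji] at hkey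
    rcases mul_eq_zero.mp hkey with h0 | h0
    · rw [h0, zero_mul]
    · have : B j i = 0 := by
        rcases mul_eq_zero.mp h0 with h' | h'
        · exact absurd h' (ne_of_gt hc)
        · exact (mul_self_eq_zero).mp h'
      rw [this, mul_zero]
end

section
/- Let d ≥ 1, c > 0 and B ∈ ℝ^{d×d}. If ((I + c·B∘B)^{d−1})_{ij} · B_{ji} = 0 for all indices i, j, then Tr((I + c·B∘B)^d) = d. -/
open Matrix

theorem poly_grad_zero_imp_constraint_zero
    (d : ℕ) (hd : 1 ≤ d) (c : ℝ) (hc : 0 < c) (B : Matrix (Fin d) (Fin d) ℝ)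
    (h : ∀ i j : Fin d, ((1 + c • (B ⊙ B)) ^ (d - 1)) i j * B j i = 0) :
    Matrix.trace ((1 + c • (B ⊙ B)) ^ d) = (d : ℝ) := by
  set M : Matrix (Fin d) (Fin d) ℝ := 1 + c • (B ⊙ B) with hM
  have hMapp : ∀ i j, M i j = (if i = j then (1:ℝ) else 0) + c * (B i j * B i j) := by
    intro i j
    simp [hM, Matrix.add_apply, Matrix.one_apply, Matrix.smul_apply, Matrix.hadamard_apply]
  have hMnn : ∀ i j, 0 ≤ M i j := by
    intro i j
    rw [hMapp]
    have h1 : 0 ≤ c * (B i j * B i j) := mul_nonneg hc.le (mul_self_nonneg _)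
    split <;> linarith
  have hMdiag : ∀ j, 1 ≤ M j j := by
    intro j
    rw [hMapp]
    have h1 : 0 ≤ c * (B j j * B j j) := mul_nonneg hc.le (mul_self_nonneg _)
    simp only [if_pos rfl, if_true]
    linarith
  have hpow_nn : ∀ k, ∀ i j, 0 ≤ (M ^ k) i j := by
    intro k
    induction k with
    | zero =>
      intro i j
      simp only [pow_zero, Matrix.one_apply]
      split <;> norm_num
    | succ n ih =>
      intro i j
      rw [pow_succ, Matrix.mul_apply]
      exact Finset.sum_nonneg fun l _ => mul_nonneg (ih i l) (hMnn l j)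
  have hmono : ∀ k, ∀ i j : Fin d, (M ^ k) i j ≤ (M ^ (k + 1)) i j := by
    intro k i j
    rw [pow_succ, Matrix.mul_apply]
    calc (M ^ k) i j = (M ^ k) i j * 1 := (mul_one _).symm
      _ ≤ (M ^ k) i j * M j j :=
          mul_le_mul_of_nonneg_left (hMdiag j) (hpow_nn k i j)
      _ ≤ ∑ l, (M ^ k) i l * M l j := by
          apply Finset.single_le_sum (f := fun l => (M ^ k) i l * M l j)
          · intro l _
            exact mul_nonneg (hpow_nn k i l) (hMnn l j)
          · exact Finset.mem_univ j
  have hkey : ∀ k, k ≤ d - 1 → ∀ i j : Fin d, (M ^ k) i j * B j i = 0 := by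
    intro k hk i j
    rcases eq_or_ne (B j i) 0 with hb | hb
    · simp [hb]
    · have h0 : (M ^ (d - 1)) i j = 0 :=
        (mul_eq_zero.mp (h i j)).resolve_right hb
      have hm : Monotone fun k => (M ^ k) i j :=
        monotone_nat_of_le_succ fun n => hmono n i j
      have hle : (M ^ k) i j ≤ (M ^ (d - 1)) i j := hm hk
      have hz : (M ^ k) i j = 0 := le_antisymm (h0 ▸ hle) (hpow_nn k i j)
      simp [hz]
  have htr : ∀ k, k ≤ d - 1 →
      Matrix.trace (M ^ (k + 1)) = Matrix.trace (M ^ k) := by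
    intro k hk
    rw [pow_succ]
    simp only [Matrix.trace, Matrix.diag, Matrix.mul_apply]
    apply Finset.sum_congr rfl
    intro i _
    have hterm : ∀ j, (M ^ k) i j * M j i = if j = i then (M ^ k) i j else 0 := by
      intro j
      rw [hMapp]
      have h2 : (M ^ k) i j * (c * (B j i * B j i))
          = c * B j i * ((M ^ k) i j * B j i) := by ring
      rw [mul_add, h2, hkey k hk i j, mul_zero, add_zero]
      split <;> simp [*]
    calc ∑ j, (M ^ k) i j * M j i
        = ∑ j, if j = i then (M ^ k) i j else 0 :=
          Finset.sum_congr rfl fun j _ => hterm j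
      _ = (M ^ k) i i := by simp
  have hfin : ∀ k, k ≤ d → Matrix.trace (M ^ k) = (d : ℝ) := by
    intro k
    induction k with
    | zero => intro _; simp [Matrix.trace_one]
    | succ n ih =>
      intro hk
      rw [htr n (by omega), ih (by omega)]
  exact hfin d le_rfl
end

section
/- (Convergence of the quadratic penalty method to a feasible point.) Let f, h : ℝ^{d×d} → ℝ be continuously differentiable (where ℝ^{d×d} carries the Frobenius norm). Suppose h satisfies: h(B) = 0 if and only if the Fréchet derivative of h at B is the zero functional. Let (ρ_k) be a sequence of positive reals with ρ_k → ∞, let (τ_k) be a bounded sequence of nonnegative reals, and let (B_k) be a sequence of matrices satisfying the inexact stationarity condition ‖Df(B_k) + ρ_k · h(B_k) · Dh(B_k)‖ ≤ τ_k for every k, where Df and Dh denote the Fréchet derivatives of f and h. Then every limit point B* of the sequence (B_k) (i.e., every B* that is the limit of (B_{k}) along some strictly increasing subsequence of indices) satisfies h(B*) = 0. -/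
open Matrix Filter

attribute [local instance] Matrix.frobeniusNormedAddCommGroup Matrix.frobeniusNormedSpace

/-- Convergence of the quadratic penalty method to a feasible point: if `h B = 0` exactly when
the Fréchet derivative of `h` at `B` vanishes, the penalty coefficients `ρ k` tend to infinity,
the tolerances `τ k` are nonnegative and bounded, and each iterate `B k` satisfies the inexact
stationarity condition `‖Df (B k) + ρ k * h (B k) • Dh (B k)‖ ≤ τ k`, then every limit point of
the sequence of iterates is feasible. -/
theorem qpm_limit_point_feasible
    (d : ℕ)
    (f h : Matrix (Fin d) (Fin d) ℝ → ℝ)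
    (hf : ContDiff ℝ 1 f) (hh : ContDiff ℝ 1 h)
    (hreg : ∀ B : Matrix (Fin d) (Fin d) ℝ, h B = 0 ↔ fderiv ℝ h B = 0)
    (ρ : ℕ → ℝ) (hρpos : ∀ k, 0 < ρ k) (hρ : Tendsto ρ atTop atTop)
    (τ : ℕ → ℝ) (hτnonneg : ∀ k, 0 ≤ τ k) (hτbdd : ∃ C : ℝ, ∀ k, τ k ≤ C)
    (B : ℕ → Matrix (Fin d) (Fin d) ℝ)
    (hstat : ∀ k, (fderiv ℝ f (B k) + (ρ k * h (B k)) • fderiv ℝ h (B k)).opNorm ≤ τ k)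
    (Bstar : Matrix (Fin d) (Fin d) ℝ)
    (φ : ℕ → ℕ) (hφ : StrictMono φ)
    (hlim : Tendsto (fun n => B (φ n)) atTop (nhds Bstar)) :
    h Bstar = 0 := by
  letI : NormedAddCommGroup (Matrix (Fin d) (Fin d) ℝ →L[ℝ] ℝ) :=
    ContinuousLinearMap.toNormedAddCommGroup
  letI : NormedSpace ℝ (Matrix (Fin d) (Fin d) ℝ →L[ℝ] ℝ) :=
    ContinuousLinearMap.toNormedSpace
  by_contra hne
  obtain ⟨C, hC⟩ := hτbdd
  set g : Matrix (Fin d) (Fin d) ℝ → (Matrix (Fin d) (Fin d) ℝ →L[ℝ] ℝ) :=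
    fun M => h M • fderiv ℝ h M with hg
  have hgcont : Continuous g :=
    (hh.continuous).smul (hh.continuous_fderiv one_ne_zero)
  have h1 : Tendsto (fun n => g (B (φ n))) atTop (nhds (g Bstar)) :=
    (hgcont.tendsto Bstar).comp hlim
  -- bound: ‖g (B k)‖ ≤ (τ k + ‖Df (B k)‖) / ρ k
  have hbound : ∀ k, ‖g (B k)‖ ≤ (τ k + ‖fderiv ℝ f (B k)‖) / ρ k := by
    intro k
    rw [le_div_iff₀ (hρpos k)]
    have key : (ρ k) • g (B k)
        = (fderiv ℝ f (B k) + (ρ k * h (B k)) • fderiv ℝ h (B k)) - fderiv ℝ f (B k) := by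
      simp only [hg, mul_smul]
      abel
    have h2 : ‖(ρ k) • g (B k)‖ ≤ τ k + ‖fderiv ℝ f (B k)‖ := by
      rw [key]
      exact le_trans (norm_sub_le _ _) (add_le_add_left (hstat k) _)
    have h3 : ‖(ρ k) • g (B k)‖ = ρ k * ‖g (B k)‖ := by
      exact (norm_smul (ρ k) (g (B k))).trans
        (by rw [Real.norm_eq_abs, abs_of_pos (hρpos k)])
    rw [h3] at h2
    linarith
  -- the norm of Df along the subsequence is eventually bounded
  have hDf : Tendsto (fun n => ‖fderiv ℝ f (B (φ n))‖) atTop (nhds ‖fderiv ℝ f Bstar‖) :=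
    ((continuous_norm.comp (hf.continuous_fderiv one_ne_zero)).tendsto Bstar).comp hlim
  have hDfbdd : ∀ᶠ n in atTop, ‖fderiv ℝ f (B (φ n))‖ ≤ ‖fderiv ℝ f Bstar‖ + 1 := by
    filter_upwards [hDf (Metric.ball_mem_nhds _ one_pos)] with n hn
    have := abs_lt.mp (by simpa [Real.dist_eq] using hn)
    linarith [this.2]
  have hρφ : Tendsto (fun n => ρ (φ n)) atTop atTop := hρ.comp hφ.tendsto_atTop
  have hzero : Tendsto (fun n => g (B (φ n))) atTop (nhds 0) := by
    refine squeeze_zero_norm'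
      (a := fun n => (C + (‖fderiv ℝ f Bstar‖ + 1)) / ρ (φ n)) ?_ ?_
    · filter_upwards [hDfbdd] with n hn
      refine le_trans (hbound (φ n)) ?_
      apply div_le_div_of_nonneg_right ?_ (hρpos (φ n)).le
      · linarith [hC (φ n)]
    · exact tendsto_const_nhds.div_atTop hρφ
  have hgz : g Bstar = 0 := tendsto_nhds_unique h1 hzero
  rcases smul_eq_zero.mp hgz with h0 | h0
  · exact hne h0
  · exact hne ((hreg Bstar).mpr h0)
end

section
/- (QPM with the polynomial constraint converges to a DAG solution.) Let d ≥ 1, c > 0, and let f : ℝ^{d×d} → ℝ be continuously differentiable (where ℝ^{d×d} carries the Frobenius norm). Let (ρ_k) be a sequence of positive reals with ρ_k → ∞, let (τ_k) be a bounded sequence of nonnegative reals, and let (B_k) be a sequence of matrices satisfying ‖∇f(B_k) + ρ_k · (Tr((I + c·B_k∘B_k)^d) − d) · (((I + c·B_k∘B_k)^{d−1})ᵀ ∘ 2dc·B_k)‖_F ≤ τ_k for every k, where ∇f denotes the Frobenius gradient of f and ‖·‖_F the Frobenius norm. Then every limit point B* of the sequence (B_k) satisfies Tr((I + c·B*∘B*)^d)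 = d. -/
open Matrix Filter

attribute [local instance] Matrix.frobeniusNormedAddCommGroup Matrix.frobeniusNormedSpace


lemma qpm_aux_trace_eq (d : ℕ) (hd : 1 ≤ d) (c : ℝ) (hc : 0 < c)
    (A : Matrix (Fin d) (Fin d) ℝ)
    (hGA : ((1 + c • (A ⊙ A)) ^ (d - 1))ᵀ ⊙ ((2 * d * c : ℝ) • A) = 0) :
    Matrix.trace ((1 + c • (A ⊙ A)) ^ d) = (d : ℝ) := by
  set M : Matrix (Fin d) (Fin d) ℝ := 1 + c • (A ⊙ A) with hMdef
  have hMentry : ∀ i j, M i j = (if i = j then (1:ℝ) else 0) + c * (A i j * A i j) := by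
    intro i j
    simp [hMdef, Matrix.add_apply, Matrix.one_apply, Matrix.hadamard_apply, smul_eq_mul]
  have hMnn : ∀ i j, 0 ≤ M i j := by
    intro i j; rw [hMentry]
    have : 0 ≤ c * (A i j * A i j) := mul_nonneg hc.le (mul_self_nonneg _)
    split <;> linarith
  have hMdiag : ∀ i, 1 ≤ M i i := by
    intro i; rw [hMentry, if_pos rfl]
    have : 0 ≤ c * (A i i * A i i) := mul_nonneg hc.le (mul_self_nonneg _)
    linarith
  have hPnn : ∀ k, ∀ i j, 0 ≤ (M ^ k) i j := by
    intro k
    induction k with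
    | zero => intro i j; rw [pow_zero, Matrix.one_apply]; split <;> norm_num
    | succ k ih =>
        intro i j
        rw [pow_succ, Matrix.mul_apply]
        exact Finset.sum_nonneg fun l _ => mul_nonneg (ih i l) (hMnn l j)
  have hPdiag : ∀ k, ∀ i, 1 ≤ (M ^ k) i i := by
    intro k
    induction k with
    | zero => intro i; rw [pow_zero, Matrix.one_apply, if_pos rfl]
    | succ k ih =>
        intro i
        rw [pow_succ, Matrix.mul_apply]
        have h1 : (M ^ k) i i * M i i ≤ ∑ l, (M ^ k) i l * M l i :=
          Finset.single_le_sum (f := fun l => (M ^ k) i l * M l i)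
            (fun l _ => mul_nonneg (hPnn k i l) (hMnn l i)) (Finset.mem_univ i)
        nlinarith [ih i, hMdiag i, hPnn k i i]
  have hmono : ∀ k m i j, (M ^ k) i j ≤ (M ^ (k + m)) i j := by
    intro k m i j
    rw [pow_add, Matrix.mul_apply]
    have h1 : (M ^ k) i j * (M ^ m) j j ≤ ∑ l, (M ^ k) i l * (M ^ m) l j :=
      Finset.single_le_sum (f := fun l => (M ^ k) i l * (M ^ m) l j)
        (fun l _ => mul_nonneg (hPnn k i l) (hPnn m l j)) (Finset.mem_univ j)
    nlinarith [hPdiag m j, hPnn k i j]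
  have hzero : ∀ i j, (M ^ (d - 1)) j i * A i j = 0 := by
    intro i j
    have h1 : ((M ^ (d - 1))ᵀ ⊙ ((2 * d * c : ℝ) • A)) i j = 0 := by
      rw [hGA]; rfl
    rw [Matrix.hadamard_apply, Matrix.transpose_apply, Matrix.smul_apply, smul_eq_mul] at h1
    have h2dc : (2 * (d : ℝ) * c) ≠ 0 := by positivity
    rcases mul_eq_zero.mp h1 with h | h
    · rw [h, zero_mul]
    · rcases mul_eq_zero.mp h with h' | h'
      · exact absurd h' h2dc
      · rw [h', mul_zero]
  have hsq : ∀ k, k ≤ d - 1 → ∀ i j, (M ^ k) j i * (A i j * A i j) = 0 := by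
    intro k hk i j
    obtain ⟨m, hm⟩ : ∃ m, d - 1 = k + m := ⟨d - 1 - k, by omega⟩
    have hle : (M ^ k) j i ≤ (M ^ (d - 1)) j i := by rw [hm]; exact hmono k m j i
    have htop : (M ^ (d - 1)) j i * (A i j * A i j) = 0 := by
      have := hzero i j
      linear_combination A i j * this
    have hub : (M ^ k) j i * (A i j * A i j) ≤ 0 := by
      calc (M ^ k) j i * (A i j * A i j) ≤ (M ^ (d - 1)) j i * (A i j * A i j) :=
            mul_le_mul_of_nonneg_right hle (mul_self_nonneg _)
        _ = 0 := htop
    have hlb : 0 ≤ (M ^ k) j i * (A i j * A i j) :=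
      mul_nonneg (hPnn k j i) (mul_self_nonneg _)
    linarith
  have hstep : ∀ k, k ≤ d - 1 → Matrix.trace (M ^ (k + 1)) = Matrix.trace (M ^ k) := by
    intro k hk
    have hdiageq : ∀ i, (M ^ (k + 1)) i i = (M ^ k) i i := by
      intro i
      rw [pow_succ, Matrix.mul_apply]
      have hterm : ∀ l, (M ^ k) i l * M l i = if l = i then (M ^ k) i i else 0 := by
        intro l
        rw [hMentry, mul_add]
        have h0 : (M ^ k) i l * (c * (A l i * A l i)) = 0 := by
          have := hsq k hk l i
          linear_combination c * this
        rw [h0, add_zero, mul_ite, mul_one, mul_zero]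
        split_ifs with h
        · subst h; rfl
        · rfl
      rw [Finset.sum_congr rfl fun l _ => hterm l, Finset.sum_ite_eq' Finset.univ i]
      simp
    simp only [Matrix.trace]
    exact Finset.sum_congr rfl fun i _ => by rw [Matrix.diag_apply, Matrix.diag_apply, hdiageq i]
  have hall : ∀ k, k ≤ d → Matrix.trace (M ^ k) = (d : ℝ) := by
    intro k
    induction k with
    | zero => intro _; rw [pow_zero, Matrix.trace_one]; simp
    | succ k ih =>
        intro hk
        rw [hstep k (by omega), ih (by omega)]
  exact hall d le_rfl

/-- QPM with the polynomial constraint `h_bin(B) = Tr((I + c·B∘B)^d) − d` converges to a DAG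
solution: here `g` is the Frobenius gradient of the continuously differentiable objective `f`
(i.e. `Df(B) H = ⟨g B, H⟩_F` for all `H`), `ρ k → ∞`, the tolerances `τ k` are nonnegative and
bounded, and each iterate satisfies the inexact stationarity condition
`‖∇f(B_k) + ρ_k (Tr((I + c·B_k∘B_k)^d) − d) • ((I + c·B_k∘B_k)^{d−1})ᵀ ∘ 2dc·B_k‖_F ≤ τ_k`.
Then every limit point `B*` satisfies `Tr((I + c·B*∘B*)^d) = d`. -/
theorem qpm_poly_limit_point_is_dag
    (d : ℕ) (hd : 1 ≤ d) (c : ℝ) (hc : 0 < c)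
    (f : Matrix (Fin d) (Fin d) ℝ → ℝ)
    (g : Matrix (Fin d) (Fin d) ℝ → Matrix (Fin d) (Fin d) ℝ)
    (hf : ContDiff ℝ 1 f)
    (hg : ∀ (B : Matrix (Fin d) (Fin d) ℝ) (H : Matrix (Fin d) (Fin d) ℝ),
      fderiv ℝ f B H = ∑ i : Fin d, ∑ j : Fin d, g B i j * H i j)
    (ρ : ℕ → ℝ) (hρpos : ∀ k, 0 < ρ k) (hρ : Tendsto ρ atTop atTop)
    (τ : ℕ → ℝ) (hτnonneg : ∀ k, 0 ≤ τ k) (hτbdd : ∃ C : ℝ, ∀ k, τ k ≤ C)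
    (B : ℕ → Matrix (Fin d) (Fin d) ℝ)
    (hstat : ∀ k, ‖g (B k) +
        (ρ k * (Matrix.trace ((1 + c • (B k ⊙ B k)) ^ d) - (d : ℝ))) •
          (((1 + c • (B k ⊙ B k)) ^ (d - 1))ᵀ ⊙ ((2 * d * c : ℝ) • B k))‖ ≤ τ k)
    (Bstar : Matrix (Fin d) (Fin d) ℝ)
    (φ : ℕ → ℕ) (hφ : StrictMono φ)
    (hlim : Tendsto (fun n => B (φ n)) atTop (nhds Bstar)) :
    Matrix.trace ((1 + c • (Bstar ⊙ Bstar)) ^ d) = (d : ℝ) := by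
  classical
  obtain ⟨C, hC⟩ := hτbdd
  -- abbreviation for the penalty-gradient term
  set F : Matrix (Fin d) (Fin d) ℝ → Matrix (Fin d) (Fin d) ℝ := fun A =>
    (Matrix.trace ((1 + c • (A ⊙ A)) ^ d) - (d : ℝ)) •
      (((1 + c • (A ⊙ A)) ^ (d - 1))ᵀ ⊙ ((2 * d * c : ℝ) • A)) with hF
  -- continuity of F
  have hent : ∀ i j : Fin d, Continuous fun A : Matrix (Fin d) (Fin d) ℝ => A i j :=
    fun i j => (continuous_apply j).comp (continuous_apply i)
  have hMc : Continuous fun A : Matrix (Fin d) (Fin d) ℝ => 1 + c • (A ⊙ A) :=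
    continuous_const.add
      (Continuous.const_smul (continuous_matrix fun i j => (hent i j).mul (hent i j)) c)
  have hcont : Continuous F := by
    apply Continuous.fun_smul
    · exact (Continuous.matrix_trace (hMc.pow d)).sub continuous_const
    · exact continuous_matrix fun i j =>
        ((continuous_apply i).comp ((continuous_apply j).comp (hMc.pow (d - 1)))).mul
          ((hent i j).const_smul (2 * d * c : ℝ))
  -- continuity of g
  have hfd : Continuous fun A => fderiv ℝ f A := hf.continuous_fderiv one_ne_zero
  have hgdef : ∀ A (i j : Fin d), g A i j = fderiv ℝ f A (Matrix.single i j 1) := by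
    intro A i j
    rw [hg]
    simp [Matrix.single, Matrix.of_apply, mul_ite, mul_one, mul_zero, ite_and]
  have hgcont : Continuous g := by
    have hge : g = fun A => Matrix.of fun i j => fderiv ℝ f A (Matrix.single i j 1) := by
      funext A; ext i j; exact hgdef A i j
    rw [hge]
    exact continuous_matrix fun i j => hfd.clm_apply continuous_const
  have hgconv : Tendsto (fun n => g (B (φ n))) atTop (nhds (g Bstar)) :=
    (hgcont.tendsto Bstar).comp hlim
  -- the key bound
  have key : ∀ k, ‖F (B k)‖ ≤ (C + ‖g (B k)‖) * (ρ k)⁻¹ := by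
    intro k
    have h1 := hstat k
    have h2 : (ρ k * (Matrix.trace ((1 + c • (B k ⊙ B k)) ^ d) - (d : ℝ))) •
        (((1 + c • (B k ⊙ B k)) ^ (d - 1))ᵀ ⊙ ((2 * d * c : ℝ) • B k)) = ρ k • F (B k) := by
      rw [hF]; exact mul_smul _ _ _
    rw [h2] at h1
    have h3 : ‖ρ k • F (B k)‖ ≤ τ k + ‖g (B k)‖ := by
      have h4 : ρ k • F (B k) = (g (B k) + ρ k • F (B k)) - g (B k) := by abel
      calc ‖ρ k • F (B k)‖ = ‖(g (B k) + ρ k • F (B k)) - g (B k)‖ := by rw [← h4]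
        _ ≤ ‖g (B k) + ρ k • F (B k)‖ + ‖g (B k)‖ := norm_sub_le _ _
        _ ≤ τ k + ‖g (B k)‖ := by linarith
    rw [norm_smul, Real.norm_eq_abs, abs_of_pos (hρpos k)] at h3
    have h5 : τ k + ‖g (B k)‖ ≤ C + ‖g (B k)‖ := by linarith [hC k]
    rw [← le_div_iff₀' (hρpos k)] at h3
    calc ‖F (B k)‖ ≤ (τ k + ‖g (B k)‖) / ρ k := h3
      _ ≤ (C + ‖g (B k)‖) / ρ k := by
          gcongr
          exact (hρpos k).le
      _ = (C + ‖g (B k)‖) * (ρ k)⁻¹ := div_eq_mul_inv _ _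
  -- limits
  have hρφ : Tendsto (fun n => ρ (φ n)) atTop atTop := hρ.comp hφ.tendsto_atTop
  have hbound : Tendsto (fun n => (C + ‖g (B (φ n))‖) * (ρ (φ n))⁻¹) atTop (nhds 0) := by
    have h1 : Tendsto (fun n => C + ‖g (B (φ n))‖) atTop (nhds (C + ‖g Bstar‖)) :=
      tendsto_const_nhds.add hgconv.norm
    have h2 : Tendsto (fun n => (ρ (φ n))⁻¹) atTop (nhds 0) := hρφ.inv_tendsto_atTop
    simpa using h1.mul h2
  have hnorm0 : Tendsto (fun n => ‖F (B (φ n))‖) atTop (nhds 0) :=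
    squeeze_zero (fun n => norm_nonneg _) (fun n => key (φ n)) hbound
  have hFlim : Tendsto (fun n => F (B (φ n))) atTop (nhds (F Bstar)) :=
    (hcont.tendsto Bstar).comp hlim
  have hF0 : F Bstar = 0 := by
    have := tendsto_nhds_unique hFlim.norm hnorm0
    exact norm_eq_zero.mp this
  rw [hF] at hF0
  rcases smul_eq_zero.mp hF0 with h1 | h2
  · exact sub_eq_zero.mp h1
  · exact qpm_aux_trace_eq d hd c hc Bstar h2
end

section
/- (Gradient of the NOTEARS constraint.) Let d ≥ 1 and B ∈ ℝ^{d×d}. The function B ↦ Tr(exp(B∘B)) is Fréchet differentiable at B, with derivative given by the linear map H ↦ Σ_{i,j} ((exp(B∘B))ᵀ ∘ 2B)_{ij} · H_{ij}; equivalently, its gradient with respect to the Frobenius inner product is the matrix (exp(B∘B))ᵀ ∘ (2B). -/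
open Matrix

attribute [local instance] Matrix.frobeniusNormedAddCommGroup Matrix.frobeniusNormedSpace

attribute [local instance] Matrix.frobeniusNormedRing Matrix.frobeniusNormedAlgebra

open NormedSpace

set_option maxHeartbeats 1000000

variable {d : ℕ}

noncomputable abbrev frobTop (n : ℕ) : TopologicalSpace (Matrix (Fin n) (Fin n) ℝ) :=
  (Matrix.frobeniusNormedAddCommGroup).toUniformSpace.toTopologicalSpace

section frob

attribute [local instance] frobTop

noncomputable def lrC (A C : Matrix (Fin d) (Fin d) ℝ) :
    Matrix (Fin d) (Fin d) ℝ →L[ℝ] Matrix (Fin d) (Fin d) ℝ :=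
  LinearMap.toContinuousLinearMap ((LinearMap.mulLeft ℝ A).comp (LinearMap.mulRight ℝ C))

@[simp] lemma lrC_apply (A C H : Matrix (Fin d) (Fin d) ℝ) : lrC A C H = A * (H * C) := rfl

lemma hasFDerivAt_pow_mat (n : ℕ) (M : Matrix (Fin d) (Fin d) ℝ) :
    HasFDerivAt (fun A : Matrix (Fin d) (Fin d) ℝ => A ^ n)
      (∑ i ∈ Finset.range n, lrC (M ^ i) (M ^ (n - 1 - i))) M := by
  induction n with
  | zero => simpa using hasFDerivAt_const (1 : Matrix (Fin d) (Fin d) ℝ) M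
  | succ n ih =>
    have h := ih.mul' (hasFDerivAt_id M)
    have heq : (fun y : Matrix (Fin d) (Fin d) ℝ => y ^ n * id y) =
        fun A : Matrix (Fin d) (Fin d) ℝ => A ^ (n + 1) := by
      funext A; simp [← pow_succ]
    rw [show ((fun A : Matrix (Fin d) (Fin d) ℝ => A ^ n) * id) = _ from heq] at h
    refine h.congr_fderiv (Eq.symm ?_)
    ext H
    simp only [ContinuousLinearMap.coe_sum', Finset.sum_apply, lrC_apply,
      ContinuousLinearMap.add_apply, ContinuousLinearMap.coe_smul', Pi.smul_apply,
      ContinuousLinearMap.smulRight_apply, ContinuousLinearMap.coe_id', id_eq, smul_eq_mul]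
    rw [Finset.sum_range_succ]
    have h1 : ∀ i ∈ Finset.range n, M ^ i * (H * M ^ (n + 1 - 1 - i)) =
        (M ^ i * (H * M ^ (n - 1 - i))) * M := by
      intro i hi
      rw [Finset.mem_range] at hi
      have : n - 1 - i + 1 = n + 1 - 1 - i := by omega
      rw [mul_assoc, mul_assoc, ← pow_succ, this]
    rw [Finset.sum_congr rfl h1, ← Finset.sum_mul]
    simp [mul_assoc]
    exact add_comm _ _

noncomputable def Ttr (d : ℕ) : Matrix (Fin d) (Fin d) ℝ →L[ℝ] ℝ :=
  LinearMap.toContinuousLinearMap (Matrix.traceLinearMap (Fin d) ℝ ℝ)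

noncomputable def mulLC (A : Matrix (Fin d) (Fin d) ℝ) :
    Matrix (Fin d) (Fin d) ℝ →L[ℝ] Matrix (Fin d) (Fin d) ℝ :=
  LinearMap.toContinuousLinearMap (LinearMap.mulLeft ℝ A)

@[simp] lemma Ttr_apply (A : Matrix (Fin d) (Fin d) ℝ) : Ttr d A = Matrix.trace A := rfl
@[simp] lemma mulLC_apply (A H : Matrix (Fin d) (Fin d) ℝ) : mulLC A H = A * H := rfl

noncomputable def fe (d n : ℕ) (A : Matrix (Fin d) (Fin d) ℝ) : ℝ :=
  ((n.factorial : ℝ))⁻¹ * Matrix.trace (A ^ n)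

noncomputable def fe' (d n : ℕ) (M : Matrix (Fin d) (Fin d) ℝ) :
    Matrix (Fin d) (Fin d) ℝ →L[ℝ] ℝ :=
  (((n.factorial : ℝ))⁻¹ * n) • ((Ttr d).comp (mulLC (M ^ (n - 1))))

lemma fe'_apply (n : ℕ) (M H : Matrix (Fin d) (Fin d) ℝ) :
    fe' d n M H = ((n.factorial : ℝ))⁻¹ * n * Matrix.trace (M ^ (n - 1) * H) := by
  simp [fe', mul_assoc]

lemma hasFDerivAt_fe (n : ℕ) (M : Matrix (Fin d) (Fin d) ℝ) :
    HasFDerivAt (fe d n) (fe' d n M) M := by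
  have h := ((Ttr d).hasFDerivAt.comp M (hasFDerivAt_pow_mat n M)).const_mul
    ((n.factorial : ℝ))⁻¹
  refine h.congr_fderiv (Eq.symm ?_)
  ext H
  simp only [fe'_apply, ContinuousLinearMap.coe_smul', Pi.smul_apply,
    ContinuousLinearMap.coe_comp', Function.comp_apply, ContinuousLinearMap.coe_sum',
    Finset.sum_apply, lrC_apply, Ttr_apply, smul_eq_mul]
  rw [Matrix.trace_sum]
  have h1 : ∀ i ∈ Finset.range n, Matrix.trace (M ^ i * (H * M ^ (n - 1 - i))) =
      Matrix.trace (M ^ (n - 1) * H) := by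
    intro i hi
    rw [Finset.mem_range] at hi
    rw [Matrix.trace_mul_comm, mul_assoc, ← pow_add]
    have : n - 1 - i + i = n - 1 := by omega
    rw [this, Matrix.trace_mul_comm]
  rw [Finset.sum_congr rfl h1, Finset.sum_const, Finset.card_range]
  ring

lemma summable_fe (M : Matrix (Fin d) (Fin d) ℝ) : Summable fun n => fe d n M := by
  have h : (fun n => fe d n M) = fun n => Ttr d (((n.factorial : ℝ))⁻¹ • M ^ n) := by
    funext n; simp [fe]
  rw [h]
  exact ((expSeries_summable' (𝕂 := ℝ) M).hasSum.mapL (Ttr d)).summable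

lemma mulLC_norm (A : Matrix (Fin d) (Fin d) ℝ) : ‖mulLC A‖ ≤ ‖A‖ := by
  refine ContinuousLinearMap.opNorm_le_bound _ (norm_nonneg A) fun H => ?_
  exact Matrix.frobenius_norm_mul A H

lemma key_trace_exp (M : Matrix (Fin d) (Fin d) ℝ) :
    HasFDerivAt (fun A : Matrix (Fin d) (Fin d) ℝ => Matrix.trace (NormedSpace.exp A))
      ((Ttr d).comp (mulLC (NormedSpace.exp M))) M := by
  set R : ℝ := ‖M‖ + 1 with hR
  have hR0 : 0 < R := add_pos_of_nonneg_of_pos (norm_nonneg M) one_pos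
  have hR1 : (0:ℝ) ≤ R := hR0.le
  set C : ℝ := ‖Ttr d‖ * max 1 ‖(1 : Matrix (Fin d) (Fin d) ℝ)‖ with hC
  have hC0 : 0 ≤ C :=
    mul_nonneg (norm_nonneg _) (le_trans zero_le_one (le_max_left _ _))
  set u : ℕ → ℝ := fun n => C * ((n : ℝ) * ((n.factorial : ℝ))⁻¹ * R ^ (n - 1)) with hu
  have husum : Summable u := by
    rw [← summable_nat_add_iff 1]
    have : (fun n => u (n + 1)) = fun n => C * (R ^ n / (n.factorial : ℝ)) := by
      funext n
      have h1 : ((n+1).factorial : ℝ) = (n + 1 : ℝ) * (n.factorial : ℝ) := by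
        push_cast [Nat.factorial_succ]; ring
      have h2 : (n.factorial : ℝ) ≠ 0 := Nat.cast_ne_zero.2 n.factorial_ne_zero
      simp only [hu, h1, Nat.add_sub_cancel]
      push_cast
      field_simp
    rw [this]
    exact (Real.summable_pow_div_factorial R).mul_left C
  have hbound : ∀ n : ℕ, ∀ x ∈ Metric.ball (0 : Matrix (Fin d) (Fin d) ℝ) R,
      ‖fe' d n x‖ ≤ u n := by
    intro n x hx
    rw [mem_ball_zero_iff] at hx
    have hx' : ‖x‖ ≤ R := hx.le
    have hpow : ‖x ^ (n - 1)‖ ≤ max 1 ‖(1 : Matrix (Fin d) (Fin d) ℝ)‖ * R ^ (n - 1) := by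
      rcases Nat.eq_zero_or_pos (n - 1) with h0 | hpos
      · rw [h0, pow_zero, pow_zero, mul_one]
        exact le_max_right _ _
      · calc ‖x ^ (n - 1)‖ ≤ ‖x‖ ^ (n - 1) := norm_pow_le' x hpos
          _ ≤ R ^ (n - 1) := by gcongr
          _ ≤ max 1 ‖(1 : Matrix (Fin d) (Fin d) ℝ)‖ * R ^ (n - 1) := by
              nth_rw 1 [← one_mul (R ^ (n - 1))]
              exact mul_le_mul_of_nonneg_right (le_max_left _ _) (by positivity)
    have h2 : ‖(Ttr d).comp (mulLC (x ^ (n - 1)))‖ ≤ ‖Ttr d‖ * ‖x ^ (n - 1)‖ := by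
      refine le_trans ((Ttr d).opNorm_comp_le _) ?_
      exact mul_le_mul_of_nonneg_left (mulLC_norm _) (norm_nonneg _)
    have hstep : ‖fe' d n x‖ ≤ |((n.factorial : ℝ))⁻¹ * n| * (‖Ttr d‖ * ‖x ^ (n - 1)‖) := by
      have e : fe' d n x
          = (((n.factorial : ℝ))⁻¹ * n) • ((Ttr d).comp (mulLC (x ^ (n - 1)))) := rfl
      rw [e]
      refine le_trans (_root_.norm_smul_le (((n.factorial : ℝ))⁻¹ * n)
        ((Ttr d).comp (mulLC (x ^ (n - 1))))) ?_
      rw [Real.norm_eq_abs]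
      exact mul_le_mul_of_nonneg_left h2 (abs_nonneg _)
    refine hstep.trans ?_
    have habs : |((n.factorial : ℝ))⁻¹ * (n : ℝ)| = ((n.factorial : ℝ))⁻¹ * n := by
      rw [abs_of_nonneg]; positivity
    rw [habs, hu, hC]
    calc ((n.factorial : ℝ))⁻¹ * n * (‖Ttr d‖ * ‖x ^ (n - 1)‖)
        ≤ ((n.factorial : ℝ))⁻¹ * n *
            (‖Ttr d‖ * (max 1 ‖(1 : Matrix (Fin d) (Fin d) ℝ)‖ * R ^ (n - 1))) := by
          gcongr
      _ = ‖Ttr d‖ * max 1 ‖(1 : Matrix (Fin d) (Fin d) ℝ)‖ *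
            ((n : ℝ) * ((n.factorial : ℝ))⁻¹ * R ^ (n - 1)) := by ring
  have hM : M ∈ Metric.ball (0 : Matrix (Fin d) (Fin d) ℝ) R := by
    rw [mem_ball_zero_iff]; simp only [hR]; linarith
  have hmain := hasFDerivAt_tsum_of_isPreconnected husum Metric.isOpen_ball
    ((convex_ball (0 : Matrix (Fin d) (Fin d) ℝ) R).isPreconnected)
    (fun n x _ => hasFDerivAt_fe n x) hbound hM (summable_fe M) hM
  have hfun : (fun y => ∑' n, fe d n y) =
      fun A : Matrix (Fin d) (Fin d) ℝ => Matrix.trace (NormedSpace.exp A) := by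
    funext y
    have h : (fun n => fe d n y) = fun n => Ttr d (((n.factorial : ℝ))⁻¹ • y ^ n) := by
      funext n; simp [fe]
    rw [h, ← (Ttr d).map_tsum (expSeries_summable' (𝕂 := ℝ) y)]
    simp only [exp_eq_tsum (𝕂 := ℝ)]
    rfl
  have hsum' : Summable fun n => fe' d n M :=
    Summable.of_norm_bounded husum (fun n => hbound n M hM)
  have hder : (∑' n, fe' d n M) = (Ttr d).comp (mulLC (NormedSpace.exp M)) := by
    ext H
    have hev : (∑' n, fe' d n M) H = ∑' n, fe' d n M H :=
      ((hsum'.hasSum.mapL (ContinuousLinearMap.apply ℝ ℝ H)).tsum_eq).symm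
    rw [hev]
    have hb : Summable fun n => fe' d n M H :=
      (hsum'.hasSum.mapL (ContinuousLinearMap.apply ℝ ℝ H)).summable
    set ψ : Matrix (Fin d) (Fin d) ℝ →L[ℝ] ℝ :=
      (Ttr d).comp (LinearMap.toContinuousLinearMap (LinearMap.mulRight ℝ H)) with hψdef
    have hψ : ∀ A : Matrix (Fin d) (Fin d) ℝ, ψ A = Matrix.trace (A * H) := fun A => rfl
    have hRHS : ((Ttr d).comp (mulLC (NormedSpace.exp M))) H
        = ∑' n, ((n.factorial : ℝ))⁻¹ * Matrix.trace (M ^ n * H) := by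
      have e1 : ((Ttr d).comp (mulLC (NormedSpace.exp M))) H = ψ (NormedSpace.exp M) := by
        rw [hψ]; rfl
      rw [e1, exp_eq_tsum (𝕂 := ℝ)]
      beta_reduce
      have e2 := ((expSeries_summable' (𝕂 := ℝ) M).hasSum.mapL ψ).tsum_eq.symm
      rw [e2]
      refine tsum_congr fun n => ?_
      rw [hψ, smul_mul_assoc, Matrix.trace_smul, smul_eq_mul]
    rw [hRHS, Summable.tsum_eq_zero_add hb]
    have h0 : fe' d 0 M H = 0 := by simp [fe'_apply]
    rw [h0, zero_add]
    refine tsum_congr fun n => ?_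
    rw [fe'_apply, Nat.add_sub_cancel]
    have h1 : ((n+1).factorial : ℝ) = (n + 1 : ℝ) * (n.factorial : ℝ) := by
      push_cast [Nat.factorial_succ]; ring
    have h2 : (n.factorial : ℝ) ≠ 0 := Nat.cast_ne_zero.2 n.factorial_ne_zero
    rw [h1]
    push_cast
    field_simp
  rw [hfun, hder] at hmain
  exact hmain

lemma frob_hadamard_le (A X : Matrix (Fin d) (Fin d) ℝ) : ‖A ⊙ X‖ ≤ ‖A‖ * ‖X‖ := by
  have hA : (0:ℝ) ≤ ∑ i, ∑ j, ‖A i j‖ ^ (2:ℝ) := by positivity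
  have hX : (0:ℝ) ≤ ∑ i, ∑ j, ‖X i j‖ ^ (2:ℝ) := by positivity
  rw [Matrix.frobenius_norm_def, Matrix.frobenius_norm_def, Matrix.frobenius_norm_def,
    ← Real.mul_rpow hA hX]
  refine Real.rpow_le_rpow (by positivity) ?_ (by norm_num)
  calc ∑ i, ∑ j, ‖(A ⊙ X) i j‖ ^ (2:ℝ)
      = ∑ i, ∑ j, ‖A i j‖ ^ (2:ℝ) * ‖X i j‖ ^ (2:ℝ) := by
        refine Finset.sum_congr rfl fun i _ => Finset.sum_congr rfl fun j _ => ?_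
        rw [Matrix.hadamard_apply, norm_mul,
          Real.mul_rpow (norm_nonneg _) (norm_nonneg _)]
    _ ≤ ∑ i, ∑ j, ‖A i j‖ ^ (2:ℝ) * (∑ k, ∑ l, ‖X k l‖ ^ (2:ℝ)) := by
        refine Finset.sum_le_sum fun i _ => Finset.sum_le_sum fun j _ => ?_
        refine mul_le_mul_of_nonneg_left ?_ (by positivity)
        calc ‖X i j‖ ^ (2:ℝ) ≤ ∑ l, ‖X i l‖ ^ (2:ℝ) :=
              Finset.single_le_sum (f := fun l => ‖X i l‖ ^ (2:ℝ))
                (fun l _ => by positivity) (Finset.mem_univ j)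
          _ ≤ ∑ k, ∑ l, ‖X k l‖ ^ (2:ℝ) :=
              Finset.single_le_sum (f := fun k => ∑ l, ‖X k l‖ ^ (2:ℝ))
                (fun k _ => by positivity) (Finset.mem_univ i)
    _ = (∑ i, ∑ j, ‖A i j‖ ^ (2:ℝ)) * (∑ i, ∑ j, ‖X i j‖ ^ (2:ℝ)) := by
        simp [Finset.sum_mul]

noncomputable def hadL (Bm : Matrix (Fin d) (Fin d) ℝ) :
    Matrix (Fin d) (Fin d) ℝ →L[ℝ] Matrix (Fin d) (Fin d) ℝ :=
  LinearMap.toContinuousLinearMap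
    { toFun := fun X => Bm ⊙ X
      map_add' := fun X Y => Matrix.hadamard_add Bm X Y
      map_smul' := fun c X => Matrix.hadamard_smul Bm X c }

@[simp] lemma hadL_apply (Bm X : Matrix (Fin d) (Fin d) ℝ) : hadL Bm X = Bm ⊙ X := rfl

lemma hasFDerivAt_hadSq (Bm : Matrix (Fin d) (Fin d) ℝ) :
    HasFDerivAt (fun A : Matrix (Fin d) (Fin d) ℝ => A ⊙ A) ((2:ℝ) • hadL Bm) Bm := by
  rw [hasFDerivAt_iff_isLittleO_nhds_zero]
  have key : ∀ H : Matrix (Fin d) (Fin d) ℝ,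
      (Bm + H) ⊙ (Bm + H) - Bm ⊙ Bm - ((2:ℝ) • hadL Bm) H = H ⊙ H := by
    intro H
    have hc : H ⊙ Bm = Bm ⊙ H := Matrix.hadamard_comm _ _
    have e : ((2:ℝ) • hadL Bm) H = (2:ℝ) • (Bm ⊙ H) := rfl
    rw [e, Matrix.hadamard_add, Matrix.add_hadamard, Matrix.add_hadamard, hc]
    module
  have : (fun H : Matrix (Fin d) (Fin d) ℝ =>
      (Bm + H) ⊙ (Bm + H) - Bm ⊙ Bm - ((2:ℝ) • hadL Bm) H) = fun H => H ⊙ H := funext key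
  rw [this]
  rw [Asymptotics.isLittleO_iff]
  intro ε hε
  filter_upwards [Metric.ball_mem_nhds (0 : Matrix (Fin d) (Fin d) ℝ) hε] with H hH
  rw [mem_ball_zero_iff] at hH
  calc ‖H ⊙ H‖ ≤ ‖H‖ * ‖H‖ := frob_hadamard_le H H
    _ ≤ ε * ‖H‖ := mul_le_mul_of_nonneg_right hH.le (norm_nonneg _)

end frob

/-- Gradient of the NOTEARS constraint: `B ↦ Tr(exp(B∘B))` is Fréchet differentiable at `B`,
with derivative `H ↦ ⟨(exp(B∘B))ᵀ ∘ 2B, H⟩_F`; i.e. its Frobenius gradient is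
`(exp(B∘B))ᵀ ∘ (2B)`. -/
theorem notears_constraint_hasFDerivAt
    (d : ℕ) (hd : 1 ≤ d) (B : Matrix (Fin d) (Fin d) ℝ) :
    ∃ L : Matrix (Fin d) (Fin d) ℝ →L[ℝ] ℝ,
      HasFDerivAt (fun A : Matrix (Fin d) (Fin d) ℝ =>
          Matrix.trace (NormedSpace.exp (A ⊙ A))) L B ∧
      ∀ H : Matrix (Fin d) (Fin d) ℝ,
        L H = ∑ i : Fin d, ∑ j : Fin d,
          ((NormedSpace.exp (B ⊙ B))ᵀ ⊙ ((2 : ℝ) • B)) i j * H i j := by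

  refine ⟨((Ttr d).comp (mulLC (NormedSpace.exp (B ⊙ B)))).comp ((2:ℝ) • hadL B), ?_, ?_⟩
  · have h := HasFDerivAt.comp (x := B) (f := fun A : Matrix (Fin d) (Fin d) ℝ => A ⊙ A)
      (g := fun M : Matrix (Fin d) (Fin d) ℝ => Matrix.trace (NormedSpace.exp M))
      (key_trace_exp (B ⊙ B)) (hasFDerivAt_hadSq B)
    exact h
  · intro H
    have e : (((Ttr d).comp (mulLC (NormedSpace.exp (B ⊙ B)))).comp ((2:ℝ) • hadL B)) H
        = Matrix.trace (NormedSpace.exp (B ⊙ B) * ((2:ℝ) • (B ⊙ H))) := rfl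
    refine Eq.trans e ?_
    rw [Matrix.trace]
    simp only [Matrix.diag_apply, Matrix.mul_apply, Matrix.smul_apply,
      Matrix.hadamard_apply, Matrix.transpose_apply, smul_eq_mul]
    rw [Finset.sum_comm]
    refine Finset.sum_congr rfl fun i _ => Finset.sum_congr rfl fun j _ => ?_
    ring
end

section
/- (Gradient of the polynomial constraint.) Let d ≥ 1, c > 0 and B ∈ ℝ^{d×d}. The function B ↦ Tr((I + c·B∘B)^d) is Fréchet differentiable at B, with derivative given by the linear map H ↦ Σ_{i,j} (((I + c·B∘B)^{d−1})ᵀ ∘ 2dc·B)_{ij} · H_{ij}; equivalently, its gradient with respect to the Frobenius inner product is the matrix ((I + c·B∘B)^{d−1})ᵀ ∘ (2dc·B). -/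
open Matrix

attribute [local instance] Matrix.frobeniusNormedAddCommGroup Matrix.frobeniusNormedSpace
attribute [local instance] Matrix.frobeniusNormedRing Matrix.frobeniusNormedAlgebra

section aux

variable {d : ℕ}

/-- Evaluation of a matrix entry, as a continuous linear map. -/
noncomputable def entryCLM (i j : Fin d) : Matrix (Fin d) (Fin d) ℝ →L[ℝ] ℝ :=
  LinearMap.toContinuousLinearMap
    { toFun := fun A : Matrix (Fin d) (Fin d) ℝ => A i j
      map_add' := fun A B => rfl
      map_smul' := fun r A => rfl }

@[simp] lemma entryCLM_apply (i j : Fin d) (A : Matrix (Fin d) (Fin d) ℝ) :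
    entryCLM i j A = A i j := rfl

/-- `Matrix.trace` as a continuous linear map. -/
noncomputable def traceCLM : Matrix (Fin d) (Fin d) ℝ →L[ℝ] ℝ :=
  LinearMap.toContinuousLinearMap (Matrix.traceLinearMap (Fin d) ℝ ℝ)

@[simp] lemma traceCLM_apply (A : Matrix (Fin d) (Fin d) ℝ) :
    traceCLM A = Matrix.trace A := rfl

/-- Derivative of a matrix power of a matrix-valued curve. -/
lemma hasDerivAt_matrix_pow {M : ℝ → Matrix (Fin d) (Fin d) ℝ}
    {M' : Matrix (Fin d) (Fin d) ℝ} {t : ℝ} (h : HasDerivAt M M' t) (n : ℕ) :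
    HasDerivAt (fun s => M s ^ (n + 1))
      (∑ k ∈ Finset.range (n + 1), M t ^ k * M' * M t ^ (n - k)) t := by
  induction n with
  | zero => simpa using h
  | succ n ih =>
      have h2 : HasDerivAt (fun s => M s ^ (n + 1) * M s)
          ((∑ k ∈ Finset.range (n + 1), M t ^ k * M' * M t ^ (n - k)) * M t
            + M t ^ (n + 1) * M') t := ih.mul h
      have heq : (fun s => M s ^ (n + 1) * M s) = fun s => M s ^ (n + 1 + 1) := by
        funext s; rw [← pow_succ]
      rw [heq] at h2
      convert h2 using 1
      rw [Finset.sum_range_succ, Finset.sum_mul]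
      congr 1
      · refine Finset.sum_congr rfl fun k hk => ?_
        have hk' : k ≤ n := Nat.lt_succ_iff.mp (Finset.mem_range.mp hk)
        have h3 : n - k + 1 = n + 1 - k := by omega
        rw [mul_assoc (M t ^ k * M'), ← pow_succ, h3]
      · simp

/-- Differentiability of the Hadamard square. -/
lemma differentiableAt_hadamard_sq (B : Matrix (Fin d) (Fin d) ℝ) :
    DifferentiableAt ℝ (fun A : Matrix (Fin d) (Fin d) ℝ => A ⊙ A) B := by
  have hrepr : (fun A : Matrix (Fin d) (Fin d) ℝ => A ⊙ A)
      = fun A => ∑ i : Fin d, ∑ j : Fin d,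
          (entryCLM i j A * entryCLM i j A) • Matrix.single i j (1 : ℝ) := by
    funext A
    conv_lhs => rw [Matrix.matrix_eq_sum_single (A ⊙ A)]
    refine Finset.sum_congr rfl fun i _ => Finset.sum_congr rfl fun j _ => ?_
    rw [Matrix.smul_single]
    simp [Matrix.hadamard_apply]
  rw [hrepr]
  refine DifferentiableAt.fun_sum fun i _ => DifferentiableAt.fun_sum fun j _ => ?_
  exact (((entryCLM i j).differentiableAt).mul
    ((entryCLM i j).differentiableAt)).smul_const _

end aux

/-- Gradient of the polynomial constraint: `B ↦ Tr((I + c·B∘B)^d)` is Fréchet differentiable at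
`B`, with derivative `H ↦ ⟨((I + c·B∘B)^{d−1})ᵀ ∘ 2dc·B, H⟩_F`; i.e. its Frobenius gradient is
`((I + c·B∘B)^{d−1})ᵀ ∘ (2dc·B)`. -/
theorem poly_constraint_hasFDerivAt
    (d : ℕ) (hd : 1 ≤ d) (c : ℝ) (hc : 0 < c) (B : Matrix (Fin d) (Fin d) ℝ) :
    ∃ L : Matrix (Fin d) (Fin d) ℝ →L[ℝ] ℝ,
      HasFDerivAt (fun A : Matrix (Fin d) (Fin d) ℝ =>
          Matrix.trace ((1 + c • (A ⊙ A)) ^ d)) L B ∧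
      ∀ H : Matrix (Fin d) (Fin d) ℝ,
        L H = ∑ i : Fin d, ∑ j : Fin d,
          (((1 + c • (B ⊙ B)) ^ (d - 1))ᵀ ⊙ ((2 * d * c : ℝ) • B)) i j * H i j := by
  -- differentiability
  set F : Matrix (Fin d) (Fin d) ℝ → ℝ :=
    fun A => Matrix.trace ((1 + c • (A ⊙ A)) ^ d) with hF_def
  have hinner : DifferentiableAt ℝ
      (fun A : Matrix (Fin d) (Fin d) ℝ => (1 + c • (A ⊙ A)) ^ d) B :=
    (((differentiableAt_hadamard_sq B).const_smul c).const_add 1).pow d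
  have hdiff : DifferentiableAt ℝ F B := by
    have := (traceCLM (d := d)).differentiableAt.comp B hinner
    exact this
  refine ⟨fderiv ℝ F B, hdiff.hasFDerivAt, fun H => ?_⟩
  obtain ⟨n, rfl⟩ : ∃ n, d = n + 1 := ⟨d - 1, (Nat.succ_pred_eq_of_pos hd).symm⟩
  have hF := hdiff.hasFDerivAt
  -- the line through B in direction H
  have hφ : HasDerivAt (fun t : ℝ => B + t • H) H 0 := by
    have := ((hasDerivAt_id (0 : ℝ)).smul_const H).const_add B
    simp only [id_eq, one_smul] at this; exact this
  have hφ0 : B + (0 : ℝ) • H = B := by simp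
  have hF' : HasFDerivAt F (fderiv ℝ F B) (B + (0 : ℝ) • H) := by
    rw [hφ0]; exact hF
  have hg1 : HasDerivAt (fun t : ℝ => F (B + t • H)) (fderiv ℝ F B H) 0 :=
    by have := hF'.comp_hasDerivAt 0 hφ; exact this
  -- explicit computation of the directional derivative
  set M0 : Matrix (Fin (n + 1)) (Fin (n + 1)) ℝ := 1 + c • (B ⊙ B) with hM0
  set C1 : Matrix (Fin (n + 1)) (Fin (n + 1)) ℝ := (2 * c) • (B ⊙ H) with hC1
  have hNrepr : (fun t : ℝ => 1 + c • ((B + t • H) ⊙ (B + t • H)))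
      = fun t : ℝ => (M0 + t • C1) + (t * t) • (c • (H ⊙ H)) := by
    funext t
    ext i j
    simp [hM0, hC1, Matrix.add_apply, Matrix.smul_apply, Matrix.hadamard_apply,
      smul_eq_mul]
    ring
  have hN : HasDerivAt (fun t : ℝ => 1 + c • ((B + t • H) ⊙ (B + t • H))) C1 0 := by
    rw [hNrepr]
    have := (((hasDerivAt_id (0 : ℝ)).smul_const C1).const_add M0).add
      (((hasDerivAt_id (0 : ℝ)).mul (hasDerivAt_id (0 : ℝ))).smul_const (c • (H ⊙ H)))
    simp at this; exact this
  have hpow := hasDerivAt_matrix_pow hN n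
  have hN0 : 1 + c • ((B + (0 : ℝ) • H) ⊙ (B + (0 : ℝ) • H)) = M0 := by
    rw [hφ0]
  rw [hN0] at hpow
  have hg2 : HasDerivAt (fun t : ℝ => F (B + t • H))
      (traceCLM (∑ k ∈ Finset.range (n + 1), M0 ^ k * C1 * M0 ^ (n - k))) 0 := by
    have := (traceCLM (d := n + 1)).hasFDerivAt.comp_hasDerivAt 0 hpow
    exact this
  have key := hg1.unique hg2
  rw [key]
  -- now compute the trace
  have hterm : ∀ k ∈ Finset.range (n + 1),
      Matrix.trace (M0 ^ k * C1 * M0 ^ (n - k)) = Matrix.trace (M0 ^ n * C1) := by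
    intro k hk
    have hk' : k ≤ n := Nat.lt_succ_iff.mp (Finset.mem_range.mp hk)
    have h3 : n - k + k = n := by omega
    rw [Matrix.trace_mul_cycle, ← pow_add, h3]
  rw [traceCLM_apply, Matrix.trace_sum, Finset.sum_congr rfl hterm, Finset.sum_const,
    Finset.card_range, nsmul_eq_mul]
  conv_rhs => rw [Finset.sum_comm]
  simp only [Matrix.trace, Matrix.diag, Matrix.mul_apply, Matrix.transpose_apply,
    Matrix.hadamard_apply, Matrix.smul_apply, smul_eq_mul, Nat.add_sub_cancel, Finset.mul_sum]
  refine Finset.sum_congr rfl fun i _ => Finset.sum_congr rfl fun j _ => ?_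
  simp only [hC1, Matrix.smul_apply, Matrix.hadamard_apply, smul_eq_mul]
  push_cast
  ring
end

section
/- Let d ≥ 1 and B ∈ ℝ^{d×d}. If Tr(exp(B∘B)) = d, then all diagonal entries of B are zero, i.e., B_{ii} = 0 for every i. -/
open Matrix

theorem notears_feasible_diag_zero
    (d : ℕ) (hd : 1 ≤ d) (B : Matrix (Fin d) (Fin d) ℝ)
    (h : Matrix.trace (NormedSpace.exp (B ⊙ B)) = (d : ℝ)) :
    ∀ i : Fin d, B i i = 0 := by
  letI : NormedAddCommGroup (Matrix (Fin d) (Fin d) ℝ) := Matrix.linftyOpNormedAddCommGroup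
  letI : NormedRing (Matrix (Fin d) (Fin d) ℝ) := Matrix.linftyOpNormedRing
  letI : NormedAlgebra ℝ (Matrix (Fin d) (Fin d) ℝ) := Matrix.linftyOpNormedAlgebra
  set A := B ⊙ B with hAdef
  have hAnn : ∀ n : ℕ, ∀ i j, 0 ≤ (A ^ n) i j := by
    intro n
    induction n with
    | zero => intro i j; simp [Matrix.one_apply]; positivity
    | succ n ih =>
      intro i j
      rw [pow_succ, Matrix.mul_apply]
      exact Finset.sum_nonneg fun k _ => mul_nonneg (ih i k) (mul_self_nonneg _)
  have hsum : Summable (fun n : ℕ => (n.factorial : ℝ)⁻¹ • A ^ n) :=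
    NormedSpace.expSeries_summable' A
  have hT : Matrix.trace (NormedSpace.exp A)
      = ∑' n : ℕ, (n.factorial : ℝ)⁻¹ * Matrix.trace (A ^ n) := by
    rw [NormedSpace.exp_eq_tsum (𝕂 := ℝ)]
    have := (LinearMap.toContinuousLinearMap
      (Matrix.traceLinearMap (Fin d) ℝ ℝ)).map_tsum hsum
    simpa [smul_eq_mul] using this
  have hsum' : Summable (fun n : ℕ => (n.factorial : ℝ)⁻¹ * Matrix.trace (A ^ n)) := by
    have := hsum.map (LinearMap.toContinuousLinearMap
      (Matrix.traceLinearMap (Fin d) ℝ ℝ)).toLinearMap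
      (LinearMap.toContinuousLinearMap (Matrix.traceLinearMap (Fin d) ℝ ℝ)).continuous
    convert this using 2 with n
    simp [Function.comp, smul_eq_mul]
  have hnn : ∀ n : ℕ, 0 ≤ (n.factorial : ℝ)⁻¹ * Matrix.trace (A ^ n) := fun n =>
    mul_nonneg (by positivity) (Finset.sum_nonneg fun i _ => hAnn n i i)
  have hle : ∑ n ∈ ({0, 1} : Finset ℕ), (n.factorial : ℝ)⁻¹ * Matrix.trace (A ^ n)
      ≤ ∑' n : ℕ, (n.factorial : ℝ)⁻¹ * Matrix.trace (A ^ n) :=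
    Summable.sum_le_tsum _ (fun n _ => hnn n) hsum'
  have h01 : ∑ n ∈ ({0, 1} : Finset ℕ), (n.factorial : ℝ)⁻¹ * Matrix.trace (A ^ n)
      = (d : ℝ) + Matrix.trace A := by
    simp [Finset.sum_pair, Matrix.trace_one]
  have htrA : Matrix.trace A ≤ 0 := by
    rw [h01] at hle
    rw [hT] at h
    linarith
  have htrnn : ∀ i ∈ Finset.univ, (0:ℝ) ≤ A i i := fun i _ => mul_self_nonneg _
  have htr0 : Matrix.trace A = 0 :=
    le_antisymm htrA (Finset.sum_nonneg htrnn)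
  intro i
  have := (Finset.sum_eq_zero_iff_of_nonneg htrnn).mp htr0 i (Finset.mem_univ i)
  have : B i i * B i i = 0 := this
  exact mul_self_eq_zero.mp this
end

section
/- Let d ≥ 1, c > 0 and B ∈ ℝ^{d×d}. If Tr((I + c·B∘B)^d) = d, then all diagonal entries of B are zero, i.e., B_{ii} = 0 for every i. -/
open Matrix

theorem poly_feasible_diag_zero
    (d : ℕ) (hd : 1 ≤ d) (c : ℝ) (hc : 0 < c) (B : Matrix (Fin d) (Fin d) ℝ)
    (h : Matrix.trace ((1 + c • (B ⊙ B)) ^ d) = (d : ℝ)) :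
    ∀ i : Fin d, B i i = 0 := by
  set M := 1 + c • (B ⊙ B) with hM
  have hMentry : ∀ i j, 0 ≤ M i j := by
    intro i j
    simp only [hM, Matrix.add_apply, Matrix.one_apply, Matrix.smul_apply,
      Matrix.hadamard_apply, smul_eq_mul]
    have : 0 ≤ c * (B i j * B i j) := mul_nonneg hc.le (mul_self_nonneg _)
    split <;> linarith
  have hpow : ∀ n, ∀ i j, 0 ≤ (M ^ n) i j := by
    intro n
    induction n with
    | zero =>
      intro i j
      simp only [pow_zero, Matrix.one_apply]
      split <;> norm_num
    | succ n ih =>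
      intro i j
      rw [pow_succ, Matrix.mul_apply]
      exact Finset.sum_nonneg fun k _ => mul_nonneg (ih i k) (hMentry k j)
  have hdiag : ∀ n, ∀ i, (M i i) ^ n ≤ (M ^ n) i i := by
    intro n
    induction n with
    | zero => intro i; simp
    | succ n ih =>
      intro i
      rw [pow_succ, pow_succ, Matrix.mul_apply]
      calc M i i ^ n * M i i ≤ (M ^ n) i i * M i i :=
            mul_le_mul_of_nonneg_right (ih i) (hMentry i i)
        _ ≤ ∑ k, (M ^ n) i k * M k i := by
            refine Finset.single_le_sum (f := fun k => (M ^ n) i k * M k i) ?_ (Finset.mem_univ i)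
            intro k _
            exact mul_nonneg (hpow n i k) (hMentry k i)
  have hMii : ∀ i, M i i = 1 + c * (B i i) ^ 2 := by
    intro i
    simp [hM, Matrix.add_apply, Matrix.one_apply, Matrix.hadamard_apply, sq]
  have hone : ∀ i, 1 ≤ M i i := by
    intro i
    rw [hMii i]
    nlinarith [sq_nonneg (B i i)]
  have hge : ∀ i ∈ Finset.univ, (1 : ℝ) ≤ (M ^ d) i i := by
    intro i _
    exact le_trans (one_le_pow₀ (hone i)) (hdiag d i)
  have htr : ∑ i, (M ^ d) i i = ∑ _i : Fin d, (1 : ℝ) := by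
    simpa [Matrix.trace, Matrix.diag] using h
  have heach : ∀ i ∈ Finset.univ, (M ^ d) i i = (1 : ℝ) := by
    have := (Finset.sum_eq_sum_iff_of_le hge).mp htr.symm
    intro i hi
    exact (this i hi).symm
  intro i
  have h1 : (M i i) ^ d ≤ 1 := (heach i (Finset.mem_univ i)) ▸ hdiag d i
  by_contra hB
  have hlt : 1 < M i i := by
    rw [hMii i]
    nlinarith [sq_pos_of_ne_zero hB]
  have : 1 < (M i i) ^ d := one_lt_pow₀ hlt (by omega)
  linarith
end

section
/- (Acyclicity characterization underlying the NOTEARS constraint.) Let d ≥ 1 and B ∈ ℝ^{d×d}. Then Tr(exp(B∘B)) = d if and only if the matrix B∘B is nilpotent, i.e., (B∘B)^d = 0; equivalently, B represents a directed acyclic graph (the directed graph with an edge j → i whenever B_{ji} ≠ 0 has no directed cycles). -/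
open Matrix
open scoped Nat

namespace NotearsAux

variable {d : ℕ}

lemma pow_entry_nonneg {A : Matrix (Fin d) (Fin d) ℝ} (hA : ∀ i j, 0 ≤ A i j) (n : ℕ) :
    ∀ i j, 0 ≤ (A ^ n) i j := by
  induction n with
  | zero =>
    intro i j
    rw [pow_zero]
    by_cases h : i = j <;> simp [Matrix.one_apply, h]
  | succ n ih =>
    intro i j
    rw [pow_succ, Matrix.mul_apply]
    exact Finset.sum_nonneg fun k _ => mul_nonneg (ih i k) (hA k j)

lemma mul_entry_le {A C : Matrix (Fin d) (Fin d) ℝ} (hA : ∀ i j, 0 ≤ A i j)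
    (hC : ∀ i j, 0 ≤ C i j) (i j k : Fin d) : A i j * C j k ≤ (A * C) i k := by
  rw [Matrix.mul_apply]
  exact Finset.single_le_sum (f := fun l => A i l * C l k)
    (fun l _ => mul_nonneg (hA i l) (hC l k)) (Finset.mem_univ j)

lemma entry_pos_of_transGen {A : Matrix (Fin d) (Fin d) ℝ} (hA : ∀ i j, 0 ≤ A i j)
    {R : Fin d → Fin d → Prop} (hR : ∀ i j, R i j → 0 < A i j)
    {i j : Fin d} (h : Relation.TransGen R i j) : ∃ k, 1 ≤ k ∧ 0 < (A ^ k) i j := by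
  induction h with
  | single h => exact ⟨1, le_refl 1, by simpa using hR _ _ h⟩
  | @tail b c _ h ih =>
    obtain ⟨k, hk1, hk⟩ := ih
    refine ⟨k + 1, by omega, ?_⟩
    have h1 : 0 < (A ^ k) i b * A b c := mul_pos hk (hR _ _ h)
    have h2 : (A ^ k) i b * A b c ≤ (A ^ (k + 1)) i c := by
      rw [pow_succ]
      exact mul_entry_le (pow_entry_nonneg hA k) hA i b c
    linarith

lemma diag_pow_pos {A : Matrix (Fin d) (Fin d) ℝ} (hA : ∀ i j, 0 ≤ A i j)
    {k : ℕ} {i : Fin d} (h : 0 < (A ^ k) i i) (m : ℕ) : 0 < (A ^ (k * (m + 1))) i i := by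
  induction m with
  | zero => simpa using h
  | succ m ih =>
    have heq : k * (m + 2) = k * (m + 1) + k := by ring
    rw [heq, pow_add]
    have h2 : (A ^ (k * (m + 1))) i i * (A ^ k) i i ≤ (A ^ (k * (m + 1)) * A ^ k) i i :=
      mul_entry_le (pow_entry_nonneg hA _) (pow_entry_nonneg hA _) i i i
    have := mul_pos ih h
    linarith

lemma path_of_entry {A : Matrix (Fin d) (Fin d) ℝ} :
    ∀ (k : ℕ) (i j : Fin d), (A ^ k) i j ≠ 0 →
      ∃ f : ℕ → Fin d, f 0 = i ∧ f k = j ∧ ∀ t < k, A (f t) (f (t + 1)) ≠ 0 := by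
  intro k
  induction k with
  | zero =>
    intro i j h
    rw [pow_zero] at h
    have hij : i = j := by
      by_contra hc
      exact h (Matrix.one_apply_ne hc)
    exact ⟨fun _ => i, rfl, hij, fun t ht => absurd ht (Nat.not_lt_zero t)⟩
  | succ k ih =>
    intro i j h
    rw [pow_succ, Matrix.mul_apply] at h
    obtain ⟨l, hl⟩ : ∃ l, (A ^ k) i l * A l j ≠ 0 := by
      by_contra hc
      push_neg at hc
      exact h (Finset.sum_eq_zero fun l _ => hc l)
    have h1 : (A ^ k) i l ≠ 0 := fun h0 => hl (by rw [h0, zero_mul])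
    have h2 : A l j ≠ 0 := fun h0 => hl (by rw [h0, mul_zero])
    obtain ⟨f, hf0, hfk, hfe⟩ := ih i l h1
    refine ⟨fun t => if t ≤ k then f t else j, by simp [hf0], by simp, ?_⟩
    intro t ht
    rcases Nat.lt_or_ge t k with h' | h'
    · have e1 : t ≤ k := h'.le
      have e2 : t + 1 ≤ k := h'
      simp only [e1, e2, if_true]
      exact hfe t h'
    · have ht' : t = k := by omega
      subst ht'
      have e1 : t ≤ t := le_refl t
      have e2 : ¬ (t + 1 ≤ t) := by omega
      simp only [e1, e2, if_true, if_false, hfk]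
      exact h2

lemma transGen_of_chain {R : Fin d → Fin d → Prop} {f : ℕ → Fin d} {k : ℕ}
    (hf : ∀ t < k, R (f t) (f (t + 1))) :
    ∀ a b, a < b → b ≤ k → Relation.TransGen R (f a) (f b) := by
  intro a b
  induction b with
  | zero => omega
  | succ b ih =>
    intro hab hbk
    rcases Nat.lt_or_ge a b with h | h
    · exact (ih h (by omega)).tail (hf b (by omega))
    · have : a = b := by omega
      subst this
      exact Relation.TransGen.single (hf a (by omega))

end NotearsAux

set_option maxHeartbeats 4000000 in
open NotearsAux in
/-- Acyclicity characterization underlying the NOTEARS constraint: `Tr(exp(B∘B)) = d` iff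
`B∘B` is nilpotent (`(B∘B)^d = 0`), iff the directed graph with an edge `j → i` whenever
`B j i ≠ 0` has no directed cycles (no vertex reaches itself by a nonempty directed path). -/
theorem notears_constraint_iff_nilpotent_iff_acyclic
    (d : ℕ) (hd : 1 ≤ d) (B : Matrix (Fin d) (Fin d) ℝ) :
    (Matrix.trace (NormedSpace.exp (B ⊙ B)) = (d : ℝ) ↔ (B ⊙ B) ^ d = 0) ∧
    ((B ⊙ B) ^ d = 0 ↔
      ∀ i : Fin d, ¬ Relation.TransGen (fun j i : Fin d => B j i ≠ 0) i i) := by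
  set A : Matrix (Fin d) (Fin d) ℝ := B ⊙ B with hAdef
  set R : Fin d → Fin d → Prop := fun j i => B j i ≠ 0 with hRdef
  have hA : ∀ i j, 0 ≤ A i j := fun i j => by
    rw [hAdef, Matrix.hadamard_apply]; exact mul_self_nonneg _
  have hAB : ∀ i j, A i j ≠ 0 ↔ B i j ≠ 0 := fun i j => by
    rw [hAdef, Matrix.hadamard_apply]
    constructor
    · intro h hB; exact h (by rw [hB, mul_zero])
    · intro h hm; exact h (mul_self_eq_zero.mp hm)
  have hRpos : ∀ i j, R i j → 0 < A i j := fun i j h =>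
    lt_of_le_of_ne (hA i j) (Ne.symm ((hAB i j).mpr h))
  -- from chains of nonzero A-entries to TransGen R
  have hedge : ∀ (f : ℕ → Fin d) (k : ℕ), (∀ t < k, A (f t) (f (t + 1)) ≠ 0) →
      ∀ a b, a < b → b ≤ k → Relation.TransGen R (f a) (f b) := by
    intro f k hf a b hab hbk
    exact Relation.TransGen.mono (fun p q h => (hAB p q).mp h) _ _
        (transGen_of_chain (R := fun p q => A p q ≠ 0) hf a b hab hbk)
  -- nilpotent → acyclic
  have hNilToC : A ^ d = 0 → ∀ i, ¬ Relation.TransGen R i i := by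
    intro hnil i hcyc
    obtain ⟨k, hk1, hk⟩ := entry_pos_of_transGen hA hRpos hcyc
    have hpos := diag_pow_pos hA hk (d - 1)
    have hd' : (d - 1) + 1 = d := by omega
    rw [hd'] at hpos
    have hz : A ^ (k * d) = 0 := by
      have hkd : d ≤ k * d := Nat.le_mul_of_pos_left d (by omega)
      have : k * d = d + (k * d - d) := by omega
      rw [this, pow_add, hnil, zero_mul]
    rw [hz] at hpos
    simp at hpos
  -- acyclic → nilpotent
  have hCtoNil : (∀ i, ¬ Relation.TransGen R i i) → A ^ d = 0 := by
    intro hC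
    ext i j
    simp only [Matrix.zero_apply]
    by_contra hne
    obtain ⟨f, hf0, hfd, hfe⟩ := path_of_entry d i j hne
    obtain ⟨a, b, hab, hfab⟩ :=
      Fintype.exists_ne_map_eq_of_card_lt (fun t : Fin (d + 1) => f t) (by simp)
    rcases lt_or_gt_of_ne hab with h | h
    · have hcyc : Relation.TransGen R (f a) (f a) := by
        have := hedge f d hfe a b (Fin.lt_def.mp h) (Nat.lt_succ_iff.mp b.isLt)
        rwa [← hfab] at this
      exact hC (f a) hcyc
    · have hcyc : Relation.TransGen R (f b) (f b) := by
        have := hedge f d hfe b a (Fin.lt_def.mp h) (Nat.lt_succ_iff.mp a.isLt)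
        rwa [hfab] at this
      exact hC (f b) hcyc
  -- acyclic → diagonal entries of positive powers vanish
  have hCtoDiag : (∀ i, ¬ Relation.TransGen R i i) → ∀ n, 1 ≤ n → ∀ i, (A ^ n) i i = 0 := by
    intro hC n hn i
    by_contra hne
    obtain ⟨f, hf0, hfn, hfe⟩ := path_of_entry n i i hne
    have hcyc := hedge f n hfe 0 n (by omega) (le_refl n)
    rw [hf0, hfn] at hcyc
    exact hC i hcyc
  -- traces of powers vanish → acyclic
  have hTraceToC : (∀ n, 1 ≤ n → Matrix.trace (A ^ n) = 0) →
      ∀ i, ¬ Relation.TransGen R i i := by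
    intro htr i hcyc
    obtain ⟨k, hk1, hk⟩ := entry_pos_of_transGen hA hRpos hcyc
    have hle : (A ^ k) i i ≤ Matrix.trace (A ^ k) :=
      Finset.single_le_sum (f := fun j => (A ^ k) j j)
        (fun j _ => pow_entry_nonneg hA k j j) (Finset.mem_univ i)
    rw [htr k hk1] at hle
    linarith
  -- analytic part
  letI : SeminormedRing (Matrix (Fin d) (Fin d) ℝ) := Matrix.linftyOpSemiNormedRing
  letI : NormedRing (Matrix (Fin d) (Fin d) ℝ) := Matrix.linftyOpNormedRing
  letI : NormedAlgebra ℝ (Matrix (Fin d) (Fin d) ℝ) := Matrix.linftyOpNormedAlgebra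
  have hsum : Summable (fun n : ℕ => ((n ! : ℝ)⁻¹) • A ^ n) :=
    NormedSpace.expSeries_summable' (𝕂 := ℝ) A
  let T : Matrix (Fin d) (Fin d) ℝ →L[ℝ] ℝ :=
    LinearMap.toContinuousLinearMap (Matrix.traceLinearMap (Fin d) ℝ ℝ)
  have hT : ∀ M : Matrix (Fin d) (Fin d) ℝ, T M = Matrix.trace M := fun M => rfl
  have hg : Summable (fun n : ℕ => ((n ! : ℝ)⁻¹) * Matrix.trace (A ^ n)) := by
    have h2 := hsum.map T.toLinearMap.toAddMonoidHom T.continuous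
    refine Summable.congr h2 fun n => ?_
    show T (((n ! : ℝ)⁻¹) • A ^ n) = _
    rw [T.map_smul, hT, smul_eq_mul]
  have htr_exp : Matrix.trace (NormedSpace.exp A) =
      ∑' n : ℕ, ((n ! : ℝ)⁻¹) * Matrix.trace (A ^ n) := by
    have h1 : NormedSpace.exp A = ∑' n : ℕ, ((n ! : ℝ)⁻¹) • A ^ n :=
      congrFun (NormedSpace.exp_eq_tsum (𝕂 := ℝ)) A
    rw [h1, ← hT, T.map_tsum hsum]
    exact tsum_congr fun n => by rw [T.map_smul, hT, smul_eq_mul]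
  have hg' : Summable (fun n : ℕ => (((n + 1) ! : ℝ)⁻¹) * Matrix.trace (A ^ (n + 1))) :=
    (summable_nat_add_iff 1).mpr hg
  have hgnn : ∀ n : ℕ, 0 ≤ (((n + 1) ! : ℝ)⁻¹) * Matrix.trace (A ^ (n + 1)) := fun n =>
    mul_nonneg (by positivity)
      (Finset.sum_nonneg fun i _ => pow_entry_nonneg hA (n + 1) i i)
  have hsplit : Matrix.trace (NormedSpace.exp A) =
      (d : ℝ) + ∑' n : ℕ, (((n + 1) ! : ℝ)⁻¹) * Matrix.trace (A ^ (n + 1)) := by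
    rw [htr_exp, Summable.tsum_eq_zero_add hg]
    congr 1
    simp [Matrix.trace_one]
  -- main chain of equivalences
  have key : Matrix.trace (NormedSpace.exp A) = (d : ℝ) ↔
      ∀ n, 1 ≤ n → Matrix.trace (A ^ n) = 0 := by
    rw [hsplit]
    constructor
    · intro h n hn
      have hts : ∑' n : ℕ, (((n + 1) ! : ℝ)⁻¹) * Matrix.trace (A ^ (n + 1)) = 0 := by
        linarith
      obtain ⟨m, rfl⟩ : ∃ m, n = m + 1 := ⟨n - 1, by omega⟩
      have hle := Summable.le_tsum hg' m (fun j _ => hgnn j)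
      rw [hts] at hle
      have h0 : (((m + 1) ! : ℝ)⁻¹) * Matrix.trace (A ^ (m + 1)) = 0 :=
        le_antisymm hle (hgnn m)
      have hfac : (((m + 1) ! : ℝ)⁻¹) ≠ 0 := by positivity
      rcases mul_eq_zero.mp h0 with h' | h'
      · exact absurd h' hfac
      · exact h'
    · intro h
      have : (fun n : ℕ => (((n + 1) ! : ℝ)⁻¹) * Matrix.trace (A ^ (n + 1))) =
          fun _ => (0 : ℝ) := by
        funext n
        rw [h (n + 1) (by omega), mul_zero]
      rw [this, tsum_zero, add_zero]
  constructor
  · constructor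
    · intro h
      exact hCtoNil (hTraceToC (key.mp h))
    · intro h
      refine key.mpr fun n hn => ?_
      have hdiag := hCtoDiag (hNilToC h) n hn
      exact Finset.sum_eq_zero fun i _ => hdiag i
  · exact ⟨hNilToC, hCtoNil⟩
end

section
/- (Acyclicity characterization underlying the polynomial constraint.) Let d ≥ 1, c > 0 and B ∈ ℝ^{d×d}. Then Tr((I + c·B∘B)^d) = d if and only if the matrix B∘B is nilpotent, i.e., (B∘B)^d = 0; equivalently, B represents a directed acyclic graph (the directed graph with an edge j → i whenever B_{ji} ≠ 0 has no directed cycles). -/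
open Matrix

section AuxNilpotent

variable {n : Type*} [Fintype n] [DecidableEq n]

private lemma powEntryNonneg (M : Matrix n n ℝ) (hM : ∀ i j, 0 ≤ M i j) :
    ∀ k i j, 0 ≤ (M ^ k) i j := by
  intro k
  induction k with
  | zero => intro i j; simp [Matrix.one_apply]; split_ifs <;> norm_num
  | succ k ih =>
      intro i j
      rw [pow_succ, Matrix.mul_apply]
      exact Finset.sum_nonneg fun m _ => mul_nonneg (ih i m) (hM m j)

private lemma diagPowLe (M : Matrix n n ℝ) (hM : ∀ i j, 0 ≤ M i j) (i : n) :
    ∀ m, (M i i) ^ m ≤ (M ^ m) i i := by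
  intro m
  induction m with
  | zero => simp
  | succ m ih =>
      rw [pow_succ, pow_succ, Matrix.mul_apply]
      calc M i i ^ m * M i i ≤ (M ^ m) i i * M i i :=
        mul_le_mul_of_nonneg_right ih (hM i i)
      _ ≤ ∑ x, (M ^ m) i x * M x i :=
        Finset.single_le_sum (f := fun x => (M ^ m) i x * M x i)
          (fun x _ => mul_nonneg (powEntryNonneg M hM m i x) (hM x i)) (Finset.mem_univ i)

private lemma existsWalk (M : Matrix n n ℝ) (hM : ∀ i j, 0 ≤ M i j) :
    ∀ ℓ i j, 0 < (M ^ ℓ) i j →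
      ∃ f : ℕ → n, f 0 = i ∧ f ℓ = j ∧ ∀ t < ℓ, 0 < M (f t) (f (t + 1)) := by
  intro ℓ
  induction ℓ with
  | zero =>
      intro i j h
      have : i = j := by
        by_contra hij
        simp [Matrix.one_apply, hij] at h
      exact ⟨fun _ => i, rfl, this ▸ rfl, by omega⟩
  | succ ℓ ih =>
      intro i j h
      rw [pow_succ, Matrix.mul_apply] at h
      have : ∃ m, 0 < (M ^ ℓ) i m * M m j := by
        by_contra hcon
        push_neg at hcon
        exact absurd (Finset.sum_nonpos fun m _ => hcon m) (not_le.2 h)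
      obtain ⟨m, hm⟩ := this
      have h1 : 0 < (M ^ ℓ) i m := by
        rcases lt_or_eq_of_le (powEntryNonneg M hM ℓ i m) with h' | h'
        · exact h'
        · simp [← h'] at hm
      have h2 : 0 < M m j := by
        rcases lt_or_eq_of_le (hM m j) with h' | h'
        · exact h'
        · simp [← h'] at hm
      obtain ⟨f, hf0, hfl, hfe⟩ := ih i m h1
      refine ⟨fun t => if t ≤ ℓ then f t else j, by simp [hf0], by simp, ?_⟩
      intro t ht
      rcases Nat.lt_or_ge t ℓ with h' | h'
      · simpa [Nat.le_of_lt h', Nat.succ_le_of_lt h'] using hfe t h'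
      · have : t = ℓ := by omega
        subst this
        simpa [hfl] using h2

private lemma chainPos (M : Matrix n n ℝ) (hM : ∀ i j, 0 ≤ M i j) (f : ℕ → n) (ℓ : ℕ)
    (hf : ∀ t < ℓ, 0 < M (f t) (f (t + 1))) :
    ∀ k a, a + k ≤ ℓ → 0 < (M ^ k) (f a) (f (a + k)) := by
  intro k
  induction k with
  | zero => intro a _; simp [Matrix.one_apply]
  | succ k ih =>
      intro a hak
      rw [pow_succ, Matrix.mul_apply]
      apply Finset.sum_pos' (fun x _ => mul_nonneg (powEntryNonneg M hM k _ x) (hM x _))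
      refine ⟨f (a + k), Finset.mem_univ _, ?_⟩
      have h1 : 0 < (M ^ k) (f a) (f (a + k)) := ih a (by omega)
      have h2 : 0 < M (f (a + k)) (f (a + k + 1)) := hf (a + k) (by omega)
      have heq : a + (k + 1) = a + k + 1 := by omega
      rw [heq]
      exact mul_pos h1 h2

omit [Fintype n] [DecidableEq n] in
private lemma chainTransGen (r : n → n → Prop) (f : ℕ → n) (ℓ : ℕ)
    (hf : ∀ t < ℓ, r (f t) (f (t + 1))) :
    ∀ a b, a < b → b ≤ ℓ → Relation.TransGen r (f a) (f b) := by
  intro a b hab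
  induction b, hab using Nat.le_induction with
  | base => intro h; exact Relation.TransGen.single (hf a (by omega))
  | succ b hb ih =>
      intro h
      exact (ih (by omega)).tail (hf b (by omega))

private lemma transGenPos (M : Matrix n n ℝ) (hM : ∀ i j, 0 ≤ M i j) {i j : n}
    (h : Relation.TransGen (fun a b => 0 < M a b) i j) :
    ∃ ℓ, 1 ≤ ℓ ∧ 0 < (M ^ ℓ) i j := by
  induction h with
  | single hb => exact ⟨1, le_refl 1, by simpa using hb⟩
  | tail _ hbc ih =>
      obtain ⟨ℓ, hl, hp⟩ := ih
      refine ⟨ℓ + 1, by omega, ?_⟩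
      rw [pow_succ, Matrix.mul_apply]
      apply Finset.sum_pos' (fun x _ => mul_nonneg (powEntryNonneg M hM ℓ _ x) (hM x _))
      exact ⟨_, Finset.mem_univ _, mul_pos hp hbc⟩

private lemma traceExpand (d : ℕ) (c : ℝ) (A : Matrix (Fin d) (Fin d) ℝ) :
    Matrix.trace ((1 + c • A) ^ d) =
      ∑ k ∈ Finset.range (d + 1), (d.choose k : ℝ) * (c ^ k * Matrix.trace (A ^ k)) := by
  rw [add_comm, Commute.add_pow (Commute.one_right (c • A)), Matrix.trace_sum]
  refine Finset.sum_congr rfl fun k hk => ?_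
  have hcast : (d.choose k : Matrix (Fin d) (Fin d) ℝ) = (d.choose k : ℝ) • 1 := by
    ext i j
    rw [← Matrix.diagonal_natCast]
    rcases eq_or_ne i j with h | h <;>
      simp [Matrix.one_apply, Matrix.diagonal_apply, h]
  rw [one_pow, mul_one, smul_pow, hcast, mul_smul_comm, mul_one, Matrix.trace_smul,
    Matrix.trace_smul]
  simp only [smul_eq_mul]

end AuxNilpotent

/-- Acyclicity characterization underlying the polynomial constraint: `Tr((I + c·B∘B)^d) = d` iff
`B∘B` is nilpotent (`(B∘B)^d = 0`), iff the directed graph with an edge `j → i` whenever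
`B j i ≠ 0` has no directed cycles (no vertex reaches itself by a nonempty directed path). -/
theorem poly_constraint_iff_nilpotent_iff_acyclic
    (d : ℕ) (hd : 1 ≤ d) (c : ℝ) (hc : 0 < c) (B : Matrix (Fin d) (Fin d) ℝ) :
    (Matrix.trace ((1 + c • (B ⊙ B)) ^ d) = (d : ℝ) ↔ (B ⊙ B) ^ d = 0) ∧
    ((B ⊙ B) ^ d = 0 ↔
      ∀ i : Fin d, ¬ Relation.TransGen (fun j i : Fin d => B j i ≠ 0) i i) := by
  set A : Matrix (Fin d) (Fin d) ℝ := B ⊙ B with hAdef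
  have hA : ∀ i j, 0 ≤ A i j := fun i j => by
    rw [hAdef, Matrix.hadamard_apply]; exact mul_self_nonneg _
  have hedge : ∀ a b, 0 < A a b ↔ B a b ≠ 0 := fun a b => by
    rw [hAdef, Matrix.hadamard_apply]; exact mul_self_pos
  set r : Fin d → Fin d → Prop := fun j i => B j i ≠ 0 with hrdef
  have htg1 : ∀ {i j}, Relation.TransGen r i j →
      Relation.TransGen (fun a b => 0 < A a b) i j :=
    fun h => Relation.TransGen.mono (fun a b hab => (hedge a b).2 hab) _ _ h
  have htrace_eq : ∀ (M : Matrix (Fin d) (Fin d) ℝ), Matrix.trace M = ∑ i, M i i :=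
    fun M => rfl
  -- trace of powers is nonnegative
  have htrace_nonneg : ∀ k, 0 ≤ Matrix.trace (A ^ k) := fun k => by
    rw [htrace_eq]
    exact Finset.sum_nonneg fun i _ => powEntryNonneg A hA k i i
  -- acyclicity implies all diagonal entries of powers (k ≥ 1) vanish
  have hdiag : (∀ i, ¬ Relation.TransGen r i i) →
      ∀ k, 1 ≤ k → ∀ i, (A ^ k) i i = 0 := by
    intro hac k hk i
    by_contra hne
    have hpos : 0 < (A ^ k) i i := lt_of_le_of_ne (powEntryNonneg A hA k i i) (Ne.symm hne)
    obtain ⟨f, hf0, hfk, hfe⟩ := existsWalk A hA k i i hpos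
    have hre : ∀ t < k, r (f t) (f (t + 1)) := fun t ht => (hedge _ _).1 (hfe t ht)
    have := chainTransGen r f k hre 0 k (by omega) le_rfl
    rw [hf0, hfk] at this
    exact hac i this
  -- a cycle yields some k with 1 ≤ k ≤ d and a positive diagonal entry of A ^ k
  have hcycle_short : ∀ i, Relation.TransGen r i i →
      ∃ k v, 1 ≤ k ∧ k ≤ d ∧ 0 < (A ^ k) v v := by
    intro i hcyc
    obtain ⟨ℓ, hℓ1, hℓpos⟩ := transGenPos A hA (htg1 hcyc)
    rcases le_or_gt ℓ d with hld | hld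
    · exact ⟨ℓ, i, hℓ1, hld, hℓpos⟩
    · obtain ⟨f, hf0, hfl, hfe⟩ := existsWalk A hA ℓ i i hℓpos
      obtain ⟨t, t', htne, hteq⟩ :=
        Fintype.exists_ne_map_eq_of_card_lt (fun t : Fin (d + 1) => f (t : ℕ)) (by simp)
      have hvne : (t : ℕ) ≠ (t' : ℕ) := fun h => htne (Fin.ext h)
      rcases Nat.lt_or_ge (t : ℕ) (t' : ℕ) with hlt | hge
      · refine ⟨(t' : ℕ) - (t : ℕ), f (t' : ℕ), by omega, by omega, ?_⟩
        have := chainPos A hA f ℓ hfe ((t' : ℕ) - (t : ℕ)) (t : ℕ) (by omega)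
        have harith : (t : ℕ) + ((t' : ℕ) - (t : ℕ)) = (t' : ℕ) := by omega
        rw [harith] at this
        rwa [hteq] at this
      · have hlt : (t' : ℕ) < (t : ℕ) := by omega
        refine ⟨(t : ℕ) - (t' : ℕ), f (t : ℕ), by omega, by omega, ?_⟩
        have := chainPos A hA f ℓ hfe ((t : ℕ) - (t' : ℕ)) (t' : ℕ) (by omega)
        have harith : (t' : ℕ) + ((t : ℕ) - (t' : ℕ)) = (t : ℕ) := by omega
        rw [harith] at this
        rwa [← hteq] at this
  -- nilpotency ↔ acyclicity
  have h23 : (A ^ d = 0) ↔ ∀ i, ¬ Relation.TransGen r i i := by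
    constructor
    · intro hnil i hcyc
      obtain ⟨ℓ, hℓ1, hℓpos⟩ := transGenPos A hA (htg1 hcyc)
      have hAl : ∀ a b, 0 ≤ (A ^ ℓ) a b := powEntryNonneg A hA ℓ
      have h1 : ((A ^ ℓ) i i) ^ d ≤ ((A ^ ℓ) ^ d) i i := diagPowLe (A ^ ℓ) hAl i d
      have h2 : 0 < ((A ^ ℓ) i i) ^ d := pow_pos hℓpos d
      have h3 : (A ^ ℓ) ^ d = 0 := by
        rw [← pow_mul]
        have hdle : d ≤ ℓ * d := Nat.le_mul_of_pos_left d (by omega)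
        have : ℓ * d = d + (ℓ * d - d) := by omega
        rw [this, pow_add, hnil, zero_mul]
      rw [h3] at h1
      simp at h1
      linarith
    · intro hac
      ext i j
      by_contra hne
      have hpos : 0 < (A ^ d) i j := by
        have := powEntryNonneg A hA d i j
        rcases lt_or_eq_of_le this with h' | h'
        · exact h'
        · exact absurd h'.symm (by simpa using hne)
      obtain ⟨f, hf0, hfd, hfe⟩ := existsWalk A hA d i j hpos
      obtain ⟨t, t', htne, hteq⟩ :=
        Fintype.exists_ne_map_eq_of_card_lt (fun t : Fin (d + 1) => f (t : ℕ)) (by simp)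
      have hvne : (t : ℕ) ≠ (t' : ℕ) := fun h => htne (Fin.ext h)
      have hre : ∀ s < d, r (f s) (f (s + 1)) := fun s hs => (hedge _ _).1 (hfe s hs)
      rcases Nat.lt_or_ge (t : ℕ) (t' : ℕ) with hlt | hge
      · have := chainTransGen r f d hre (t : ℕ) (t' : ℕ) hlt (by omega)
        rw [hteq] at this
        exact hac _ this
      · have hlt : (t' : ℕ) < (t : ℕ) := by omega
        have := chainTransGen r f d hre (t' : ℕ) (t : ℕ) hlt (by omega)
        rw [← hteq] at this
        exact hac _ this
  -- trace condition ↔ acyclicity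
  have h13 : Matrix.trace ((1 + c • A) ^ d) = (d : ℝ) ↔
      ∀ i, ¬ Relation.TransGen r i i := by
    rw [traceExpand]
    constructor
    · intro hsum
      intro i hcyc
      obtain ⟨k, v, hk1, hkd, hkpos⟩ := hcycle_short i hcyc
      have hFnonneg : ∀ m ∈ (Finset.range (d + 1)).erase 0,
          0 ≤ (d.choose m : ℝ) * (c ^ m * Matrix.trace (A ^ m)) := fun m _ =>
        mul_nonneg (Nat.cast_nonneg _)
          (mul_nonneg (pow_nonneg hc.le m) (htrace_nonneg m))
      have hFk : 0 < (d.choose k : ℝ) * (c ^ k * Matrix.trace (A ^ k)) := by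
        apply mul_pos
        · exact_mod_cast Nat.choose_pos hkd
        apply mul_pos (pow_pos hc k)
        rw [htrace_eq]
        exact Finset.sum_pos' (fun m _ => powEntryNonneg A hA k m m)
          ⟨v, Finset.mem_univ v, hkpos⟩
      have hmem : k ∈ (Finset.range (d + 1)).erase 0 := by
        simp [Finset.mem_erase, Finset.mem_range]; omega
      have hF0 : (d.choose 0 : ℝ) * (c ^ 0 * Matrix.trace (A ^ 0)) = (d : ℝ) := by
        simp [Matrix.trace_one]
      rw [← Finset.add_sum_erase (Finset.range (d + 1)) _
        (Finset.mem_range.2 (by omega : 0 < d + 1)), hF0] at hsum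
      have hzero : ∑ m ∈ (Finset.range (d + 1)).erase 0,
          (d.choose m : ℝ) * (c ^ m * Matrix.trace (A ^ m)) = 0 := by linarith
      have hposum : 0 < ∑ m ∈ (Finset.range (d + 1)).erase 0,
          (d.choose m : ℝ) * (c ^ m * Matrix.trace (A ^ m)) :=
        Finset.sum_pos' hFnonneg ⟨k, hmem, hFk⟩
      rw [hzero] at hposum
      exact lt_irrefl 0 hposum
    · intro hac
      rw [Finset.sum_eq_single_of_mem 0 (Finset.mem_range.2 (by omega : 0 < d + 1))]
      · simp [Matrix.trace_one]
      · intro k _ hk0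
        have : Matrix.trace (A ^ k) = 0 := by
          rw [htrace_eq]
          exact Finset.sum_eq_zero fun i _ => hdiag hac k (by omega) i
        rw [this]
        ring
  exact ⟨h13.trans h23.symm, h23⟩
end
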